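/- (Smoothing property of the quadrilinear operator B_4) Let s ≥ 0 and ε ∈ (0, 1/2). Then for every t ∈ ℝ the operator B_4 := B_4^1 + B_4^2 maps (Ḣ^s)⁴ into Ḣ^{s+ε} and satisfies ‖B_4(φ,ψ,ξ,η)‖_{Ḣ^{s+ε}} ≤ C(s,ε) ‖φ‖_{Ḣ^s} ‖ψ‖_{Ḣ^s} ‖ξ‖_{Ḣ^s} ‖η‖_{Ḣ^s}, with a constant C(s,ε) independent of t. -/

import Mathlib

open MeasureTheory Set

noncomputable section

/-- The weight `|k|^(2s)` appearing in the `Ḣ^s` norm. -/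
def wt (s : ℝ) (k : ℤ) : ℝ := ((|k| : ℤ) : ℝ) ^ (2 * s)

/-- Membership in the homogeneous Sobolev space `Ḣ^s` of sequences indexed by
nonzero integers. -/
def memH (s : ℝ) (u : ℤ → ℂ) : Prop :=
  Summable (fun k : {k : ℤ // k ≠ 0} => wt s k.1 * ‖u k.1‖ ^ 2)

/-- The `Ḣ^s` norm. -/
def hnorm (s : ℝ) (u : ℤ → ℂ) : ℝ :=
  Real.sqrt (∑' k : {k : ℤ // k ≠ 0}, wt s k.1 * ‖u k.1‖ ^ 2)

/-- The `(Ḣ^s)²` norm of a pair. -/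
def hnorm2 (s : ℝ) (u v : ℤ → ℂ) : ℝ :=
  Real.sqrt (hnorm s u ^ 2 + hnorm s v ^ 2)

/-- The conserved energy functional `𝓔(u,v) = 2‖u‖² + 2‖v‖² + ‖u-v‖²` (in `Ḣ^0`). -/
def energyE (u v : ℤ → ℂ) : ℝ :=
  2 * hnorm 0 u ^ 2 + 2 * hnorm 0 v ^ 2 + hnorm 0 (fun k => u k - v k) ^ 2

/-- Projection `𝒫` onto the low Fourier modes `|k| ≤ N`. -/
def Plow (N : ℕ) (u : ℤ → ℂ) : ℤ → ℂ := fun k => if |k| ≤ (N : ℤ) then u k else 0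

/-- Projection `𝒬 = I - 𝒫` onto the high Fourier modes `|k| > N`. -/
def Qhigh (N : ℕ) (u : ℤ → ℂ) : ℤ → ℂ := fun k => if |k| ≤ (N : ℤ) then 0 else u k

/-- The oscillating factor `e^{3 i k k₁ k₂ t}` with `k₂ = k - k₁`. -/
def osc2 (t : ℝ) (k k1 : ℤ) : ℂ :=
  Complex.exp (3 * Complex.I * (k : ℂ) * (k1 : ℂ) * ((k - k1 : ℤ) : ℂ) * (t : ℂ))

/-- The oscillating factor `e^{3 i (k₁+k₂)(k₂+k₃)(k₁+k₃) t}`. -/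
def osc3 (t : ℝ) (k1 k2 k3 : ℤ) : ℂ :=
  Complex.exp (3 * Complex.I * ((k1 + k2 : ℤ) : ℂ) * ((k2 + k3 : ℤ) : ℂ) *
    ((k1 + k3 : ℤ) : ℂ) * (t : ℂ))

/-- The bilinear operator `B₁` at time `t`. -/
def B1 (t : ℝ) (φ ψ : ℤ → ℂ) : ℤ → ℂ := fun k =>
  Complex.I * (k : ℂ) / 2 *
    ∑' k1 : ℤ, if k1 ≠ 0 ∧ k - k1 ≠ 0 then osc2 t k k1 * φ k1 * ψ (k - k1) else 0

/-- The bilinear operator `B₂` at time `t`. -/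
def B2 (t : ℝ) (φ ψ : ℤ → ℂ) : ℤ → ℂ := fun k =>
  (1 / 6 : ℂ) *
    ∑' k1 : ℤ, if k1 ≠ 0 ∧ k - k1 ≠ 0 then
      osc2 t k k1 * φ k1 * ψ (k - k1) / ((k1 : ℂ) * ((k - k1 : ℤ) : ℂ)) else 0

/-- The trilinear operator `R₃` at time `t`. -/
def R3 (t : ℝ) (φ ψ ξ : ℤ → ℂ) : ℤ → ℂ := fun k =>
  ∑' p : ℤ × ℤ,
    if p.1 ≠ 0 ∧ p.2 ≠ 0 ∧ k - p.1 - p.2 ≠ 0 then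
      osc3 t p.1 p.2 (k - p.1 - p.2) * φ p.1 * ψ p.2 * ξ (k - p.1 - p.2) / (p.1 : ℂ)
    else 0

/-- The resonant part `R₃res` (sum over `(k₁+k₂)(k₂+k₃)(k₁+k₃) = 0`). -/
def R3res (φ ψ ξ : ℤ → ℂ) : ℤ → ℂ := fun k =>
  ∑' p : ℤ × ℤ,
    if p.1 ≠ 0 ∧ p.2 ≠ 0 ∧ k - p.1 - p.2 ≠ 0 ∧
        (p.1 + p.2) * (p.2 + (k - p.1 - p.2)) * (p.1 + (k - p.1 - p.2)) = 0 then
      φ p.1 * ψ p.2 * ξ (k - p.1 - p.2) / (p.1 : ℂ)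
    else 0

/-- The nonresonant part `R₃nres` (sum over `(k₁+k₂)(k₂+k₃)(k₁+k₃) ≠ 0`). -/
def R3nres (t : ℝ) (φ ψ ξ : ℤ → ℂ) : ℤ → ℂ := fun k =>
  ∑' p : ℤ × ℤ,
    if p.1 ≠ 0 ∧ p.2 ≠ 0 ∧ k - p.1 - p.2 ≠ 0 ∧
        (p.1 + p.2) * (p.2 + (k - p.1 - p.2)) * (p.1 + (k - p.1 - p.2)) ≠ 0 then
      osc3 t p.1 p.2 (k - p.1 - p.2) * φ p.1 * ψ p.2 * ξ (k - p.1 - p.2) / (p.1 : ℂ)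
    else 0

/-- The operator `R₃nres1(φ,ψ,ξ) = R₃nres(φ,𝒫ψ,ξ) + R₃nres(φ,𝒬ψ,𝒫ξ)`. -/
def R3nres1 (N : ℕ) (t : ℝ) (φ ψ ξ : ℤ → ℂ) : ℤ → ℂ := fun k =>
  R3nres t φ (Plow N ψ) ξ k + R3nres t φ (Qhigh N ψ) (Plow N ξ) k

/-- The trilinear operator `B₃` (nonresonant indices). -/
def B3 (t : ℝ) (φ ψ ξ : ℤ → ℂ) : ℤ → ℂ := fun k =>
  ∑' p : ℤ × ℤ,
    if p.1 ≠ 0 ∧ p.2 ≠ 0 ∧ k - p.1 - p.2 ≠ 0 ∧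
        (p.1 + p.2) * (p.2 + (k - p.1 - p.2)) * (p.1 + (k - p.1 - p.2)) ≠ 0 then
      osc3 t p.1 p.2 (k - p.1 - p.2) * φ p.1 * ψ p.2 * ξ (k - p.1 - p.2) /
        ((p.1 : ℂ) * ((p.1 + p.2 : ℤ) : ℂ) * ((p.2 + (k - p.1 - p.2) : ℤ) : ℂ) *
          ((p.1 + (k - p.1 - p.2) : ℤ) : ℂ))
    else 0

/-- The operator `B₃₀(φ,ψ,ξ) = B₃(φ,𝒬ψ,𝒬ξ)`. -/
def B30 (N : ℕ) (t : ℝ) (φ ψ ξ : ℤ → ℂ) : ℤ → ℂ :=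
  B3 t φ (Qhigh N ψ) (Qhigh N ξ)

/-- The phase `Φ(k₁,k₂,k₃,k₄) = (k₁+k₂+k₃+k₄)³ - k₁³ - k₂³ - k₃³ - k₄³`. -/
def Phi4 (k1 k2 k3 k4 : ℤ) : ℤ :=
  (k1 + k2 + k3 + k4) ^ 3 - k1 ^ 3 - k2 ^ 3 - k3 ^ 3 - k4 ^ 3

/-- The oscillating factor `e^{i Φ(k₁,k₂,k₃,k₄) t}`. -/
def osc4 (t : ℝ) (k1 k2 k3 k4 : ℤ) : ℂ :=
  Complex.exp (Complex.I * ((Phi4 k1 k2 k3 k4 : ℤ) : ℂ) * (t : ℂ))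

/-- The quadrilinear operator `B₄¹`. -/
def B41 (t : ℝ) (φ ψ ξ η : ℤ → ℂ) : ℤ → ℂ := fun k =>
  ∑' q : ℤ × ℤ × ℤ,
    let k1 := q.1; let k2 := q.2.1; let k3 := q.2.2; let k4 := k - k1 - k2 - k3
    if k1 ≠ 0 ∧ k2 ≠ 0 ∧ k3 ≠ 0 ∧ k4 ≠ 0 ∧
        (k1 + k2) * (k1 + k3 + k4) * (k2 + k3 + k4) ≠ 0 then
      osc4 t k1 k2 k3 k4 * φ k1 * ψ k2 * ξ k3 * η k4 /
        (((k1 + k2 : ℤ) : ℂ) * ((k1 + k3 + k4 : ℤ) : ℂ) * ((k2 + k3 + k4 : ℤ) : ℂ))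
    else 0

/-- The quadrilinear operator `B₄²`. -/
def B42 (t : ℝ) (φ ψ ξ η : ℤ → ℂ) : ℤ → ℂ := fun k =>
  ∑' q : ℤ × ℤ × ℤ,
    let k1 := q.1; let k2 := q.2.1; let k3 := q.2.2; let k4 := k - k1 - k2 - k3
    if k1 ≠ 0 ∧ k2 ≠ 0 ∧ k3 ≠ 0 ∧ k4 ≠ 0 ∧
        (k1 + k2) * (k1 + k3 + k4) * (k2 + k3 + k4) ≠ 0 then
      osc4 t k1 k2 k3 k4 * ((k3 + k4 : ℤ) : ℂ) * φ k1 * ψ k2 * ξ k3 * η k4 /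
        ((k1 : ℂ) * ((k1 + k2 : ℤ) : ℂ) * ((k1 + k3 + k4 : ℤ) : ℂ) *
          ((k2 + k3 + k4 : ℤ) : ℂ))
    else 0

/-- The quadrilinear operator `B₄ = B₄¹ + B₄²`. -/
def B4 (t : ℝ) (φ ψ ξ η : ℤ → ℂ) : ℤ → ℂ := fun k =>
  B41 t φ ψ ξ η k + B42 t φ ψ ξ η k

/-- Right-hand side (before the `ik/2` factor and integration) of the `u`-equation
of the transformed Majda–Biello system. -/
def mbRHSu (u v : ℝ → ℤ → ℂ) (τ : ℝ) (k : ℤ) : ℂ :=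
  ∑' k1 : ℤ, if k1 ≠ 0 ∧ k - k1 ≠ 0 then
    osc2 τ k k1 * (u τ k1 * v τ (k - k1) - u τ k1 * u τ (k - k1)) else 0

/-- Right-hand side (before the `ik/2` factor and integration) of the `v`-equation
of the transformed Majda–Biello system. -/
def mbRHSv (u v : ℝ → ℤ → ℂ) (τ : ℝ) (k : ℤ) : ℂ :=
  ∑' k1 : ℤ, if k1 ≠ 0 ∧ k - k1 ≠ 0 then
    osc2 τ k k1 * (u τ k1 * v τ (k - k1) - v τ k1 * v τ (k - k1)) else 0

/-- `(u,v)` is a solution of the transformed Majda–Biello system on `[0,T]`: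
it belongs to `L^∞([0,T];(Ḣ^0)²)` and satisfies the integrated equations. -/
def IsMBSolution (T : ℝ) (u v : ℝ → ℤ → ℂ) : Prop :=
  (∃ M : ℝ, ∀ t ∈ Icc (0 : ℝ) T,
      memH 0 (u t) ∧ memH 0 (v t) ∧ hnorm2 0 (u t) (v t) ≤ M) ∧
  ∀ k : ℤ, k ≠ 0 → ∀ t ∈ Icc (0 : ℝ) T,
    (u t k - u 0 k = Complex.I * (k : ℂ) / 2 * (∫ τ in (0 : ℝ)..t, mbRHSu u v τ k)) ∧
    (v t k - v 0 k = Complex.I * (k : ℂ) / 2 * (∫ τ in (0 : ℝ)..t, mbRHSv u v τ k))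

/-- The (finite) right-hand side of the `u`-equation of the `N`-th Galerkin system. -/
def galRHSu (N : ℕ) (t : ℝ) (f g : ℤ → ℂ) (k : ℤ) : ℂ :=
  Complex.I * (k : ℂ) / 2 * ∑ k1 ∈ Finset.Icc (-(N : ℤ)) (N : ℤ),
    (if k1 ≠ 0 ∧ k - k1 ≠ 0 ∧ |k - k1| ≤ (N : ℤ) then
      osc2 t k k1 * (f k1 * g (k - k1) - f k1 * f (k - k1)) else 0)

/-- The (finite) right-hand side of the `v`-equation of the `N`-th Galerkin system. -/
def galRHSv (N : ℕ) (t : ℝ) (f g : ℤ → ℂ) (k : ℤ) : ℂ :=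
  Complex.I * (k : ℂ) / 2 * ∑ k1 ∈ Finset.Icc (-(N : ℤ)) (N : ℤ),
    (if k1 ≠ 0 ∧ k - k1 ≠ 0 ∧ |k - k1| ≤ (N : ℤ) then
      osc2 t k k1 * (f k1 * g (k - k1) - g k1 * g (k - k1)) else 0)

/-- `(u,v)` solves the `N`-th Galerkin system on the set `S` with initial data
`(uin, vin)`. -/
def IsGalerkinSolution (N : ℕ) (uin vin : ℤ → ℂ) (S : Set ℝ) (u v : ℝ → ℤ → ℂ) : Prop :=
  (∀ k : ℤ, k ≠ 0 → u 0 k = uin k ∧ v 0 k = vin k) ∧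
  ∀ t ∈ S, ∀ k : ℤ, k ≠ 0 →
    HasDerivWithinAt (fun τ : ℝ => u τ k)
      (if |k| ≤ (N : ℤ) then galRHSu N t (u t) (v t) k else 0) S t ∧
    HasDerivWithinAt (fun τ : ℝ => v τ k)
      (if |k| ≤ (N : ℤ) then galRHSv N t (u t) (v t) k else 0) S t


namespace B4Aux

lemma ofReal_norm_eq_coe_nnnorm {E : Type*} [SeminormedAddCommGroup E] (x : E) :
    ENNReal.ofReal ‖x‖ = (‖x‖₊ : ENNReal) := ENNReal.ofReal_eq_coe_nnreal _

noncomputable def iv (n : ℤ) : ℝ := ((n : ℝ) ^ 2)⁻¹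

lemma iv_nonneg (n : ℤ) : 0 ≤ iv n := by unfold iv; positivity

lemma iv_zero : iv 0 = 0 := by simp [iv]

lemma iv_le_one (n : ℤ) : iv n ≤ 1 := by
  rcases eq_or_ne n 0 with h | h
  · simp [h, iv]
  · have h1 : (1 : ℝ) ≤ (n : ℝ) ^ 2 := by
      have : (1 : ℤ) ≤ n ^ 2 := by
        rcases lt_or_gt_of_ne h with h' | h' <;> nlinarith
      exact_mod_cast this
    rw [iv]
    exact inv_le_one_of_one_le₀ h1

lemma summable_iv : Summable iv := by
  have := (Real.summable_one_div_int_pow (p := 2)).mpr one_lt_two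
  exact (by simpa [one_div] using this : Summable fun n : ℤ => ((n : ℝ) ^ 2)⁻¹)

noncomputable def Z2 : ℝ := ∑' n : ℤ, iv n

lemma Z2_nonneg : 0 ≤ Z2 := tsum_nonneg fun n => iv_nonneg n

def eAdd (A : ℤ) : ℤ ≃ ℤ :=
  ⟨fun n => A + n, fun n => n - A, fun n => by ring, fun n => by ring⟩

def eSub (B : ℤ) : ℤ ≃ ℤ :=
  ⟨fun n => B - n, fun n => B - n, fun n => by ring, fun n => by ring⟩

lemma summable_iv_add (A : ℤ) : Summable (fun n : ℤ => iv (A + n)) :=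
  ((eAdd A).summable_iff (f := iv)).mpr summable_iv

lemma tsum_iv_add (A : ℤ) : ∑' n : ℤ, iv (A + n) = Z2 :=
  Equiv.tsum_eq (eAdd A) iv

lemma summable_iv_sub (B : ℤ) : Summable (fun n : ℤ => iv (B - n)) :=
  ((eSub B).summable_iff (f := iv)).mpr summable_iv

lemma tsum_iv_sub (B : ℤ) : ∑' n : ℤ, iv (B - n) = Z2 :=
  Equiv.tsum_eq (eSub B) iv

lemma core {x y m : ℤ} (hm : m ≠ 0) (h : |m| ≤ |x| + |y|) :
    iv x * iv y ≤ 4 * iv m * (iv x + iv y) := by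
  rcases eq_or_ne x 0 with hx | hx
  · rw [hx, iv_zero, zero_mul]
    nlinarith [mul_nonneg (iv_nonneg m) (iv_nonneg y), iv_nonneg y, iv_nonneg m]
  rcases eq_or_ne y 0 with hy | hy
  · rw [hy, iv_zero, mul_zero]
    nlinarith [mul_nonneg (iv_nonneg m) (iv_nonneg x), iv_nonneg x, iv_nonneg m]
  have hm2 : (0 : ℝ) < (m : ℝ) ^ 2 := by
    have : ((m : ℝ)) ≠ 0 := Int.cast_ne_zero.mpr hm
    positivity
  rcases le_total |x| |y| with hxy | hxy
  · have h2 : (m : ℝ) ^ 2 ≤ 4 * (y : ℝ) ^ 2 := by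
      have hmy : |m| ≤ 2 * |y| := by linarith
      have : m ^ 2 ≤ 4 * y ^ 2 := by nlinarith [sq_abs m, sq_abs y, abs_nonneg m]
      exact_mod_cast this
    have hy2 : (0 : ℝ) < (y : ℝ) ^ 2 := by
      have : ((y : ℝ)) ≠ 0 := Int.cast_ne_zero.mpr hy
      positivity
    have key : iv y ≤ 4 * iv m := by
      rw [iv, iv, ← one_div, show (4 : ℝ) * ((m:ℝ)^2)⁻¹ = 4 / (m:ℝ)^2 by ring,
        div_le_div_iff₀ hy2 hm2]
      linarith
    calc iv x * iv y ≤ iv x * (4 * iv m) :=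
          mul_le_mul_of_nonneg_left key (iv_nonneg x)
      _ ≤ 4 * iv m * (iv x + iv y) := by nlinarith [iv_nonneg x, iv_nonneg y, iv_nonneg m]
  · have h2 : (m : ℝ) ^ 2 ≤ 4 * (x : ℝ) ^ 2 := by
      have hmy : |m| ≤ 2 * |x| := by linarith
      have : m ^ 2 ≤ 4 * x ^ 2 := by nlinarith [sq_abs m, sq_abs x, abs_nonneg m]
      exact_mod_cast this
    have hx2 : (0 : ℝ) < (x : ℝ) ^ 2 := by
      have : ((x : ℝ)) ≠ 0 := Int.cast_ne_zero.mpr hx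
      positivity
    have key : iv x ≤ 4 * iv m := by
      rw [iv, iv, ← one_div, show (4 : ℝ) * ((m:ℝ)^2)⁻¹ = 4 / (m:ℝ)^2 by ring,
        div_le_div_iff₀ hx2 hm2]
      linarith
    calc iv x * iv y ≤ (4 * iv m) * iv y :=
          mul_le_mul_of_nonneg_right key (iv_nonneg y)
      _ ≤ 4 * iv m * (iv x + iv y) := by nlinarith [iv_nonneg x, iv_nonneg y, iv_nonneg m]

lemma sum_iv_mul {u v : ℤ → ℤ} {m : ℤ} (hm : m ≠ 0)
    (habs : ∀ n, |m| ≤ |u n| + |v n|)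
    (hu : Summable (fun n => iv (u n))) (hv : Summable (fun n => iv (v n)))
    (hus : ∑' n, iv (u n) ≤ Z2) (hvs : ∑' n, iv (v n) ≤ Z2) :
    Summable (fun n => iv (u n) * iv (v n)) ∧
      ∑' n, iv (u n) * iv (v n) ≤ 8 * Z2 * iv m := by
  have hb : ∀ n, iv (u n) * iv (v n) ≤ 4 * iv m * (iv (u n) + iv (v n)) :=
    fun n => core hm (habs n)
  have hS : Summable (fun n => 4 * iv m * (iv (u n) + iv (v n))) := (hu.add hv).mul_left _
  have hsum : Summable (fun n => iv (u n) * iv (v n)) :=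
    Summable.of_nonneg_of_le (fun n => mul_nonneg (iv_nonneg _) (iv_nonneg _)) hb hS
  refine ⟨hsum, ?_⟩
  calc ∑' n, iv (u n) * iv (v n) ≤ ∑' n, 4 * iv m * (iv (u n) + iv (v n)) :=
        Summable.tsum_le_tsum hb hsum hS
    _ = 4 * iv m * (∑' n, iv (u n) + ∑' n, iv (v n)) := by
        rw [tsum_mul_left, Summable.tsum_add hu hv]
    _ ≤ 4 * iv m * (Z2 + Z2) := by
        have h1 : ∑' n, iv (u n) + ∑' n, iv (v n) ≤ Z2 + Z2 := by linarith
        nlinarith [iv_nonneg m]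
    _ = 8 * Z2 * iv m := by ring

lemma tsum_prod_le {f : ℤ × ℤ → ℝ} (hf : ∀ p, 0 ≤ f p)
    {g : ℤ → ℝ} (hg : Summable g)
    (h1 : ∀ x, Summable (fun y => f (x, y)))
    (h2 : ∀ x, ∑' y, f (x, y) ≤ g x) :
    Summable f ∧ ∑' p, f p ≤ ∑' x, g x := by
  have hrow : Summable (fun x => ∑' y, f (x, y)) :=
    hg.of_nonneg_of_le (fun x => tsum_nonneg fun y => hf _) h2
  have hsf : Summable f := (summable_prod_of_nonneg hf).mpr ⟨h1, hrow⟩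
  refine ⟨hsf, ?_⟩
  rw [Summable.tsum_prod' hsf h1]
  exact Summable.tsum_le_tsum h2 hrow hg

end B4Aux
namespace B4Aux

lemma iv_neg (n : ℤ) : iv (-n) = iv n := by
  unfold iv; push_cast; rw [neg_sq]

lemma iv_two_mul_le (k : ℤ) : iv (2 * k) ≤ iv k := by
  rcases eq_or_ne k 0 with h | h
  · simp [h, iv_zero]
  · have h1 : (0 : ℝ) < (k : ℝ) ^ 2 := by
      have : ((k : ℝ)) ≠ 0 := Int.cast_ne_zero.mpr h
      positivity
    unfold iv
    have h2 : (k : ℝ) ^ 2 ≤ ((2 * k : ℤ) : ℝ) ^ 2 := by push_cast; nlinarith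
    exact inv_anti₀ h1 h2

/-- Inner one-dimensional bound: `∑_y iv(x+y) iv(k-y)`. -/
lemma inner_bound (k x : ℤ) (hk : k ≠ 0) :
    Summable (fun y : ℤ => iv (x + y) * iv (k - y)) ∧
    ∑' y : ℤ, iv (x + y) * iv (k - y) ≤ (if x = -k then Z2 else 8 * Z2 * iv (k + x)) := by
  by_cases hx : x = -k
  · subst hx
    have hpt : ∀ y : ℤ, iv (-k + y) * iv (k - y) ≤ iv (k - y) := by
      intro y
      have h : (-k + y : ℤ) = -(k - y) := by ring
      rw [h, iv_neg]
      exact mul_le_of_le_one_left (iv_nonneg _) (iv_le_one _)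
    have hsum : Summable (fun y : ℤ => iv (-k + y) * iv (k - y)) :=
      Summable.of_nonneg_of_le (fun y => mul_nonneg (iv_nonneg _) (iv_nonneg _)) hpt
        (summable_iv_sub k)
    refine ⟨hsum, ?_⟩
    simp only [if_pos rfl]
    calc ∑' y : ℤ, iv (-k + y) * iv (k - y) ≤ ∑' y : ℤ, iv (k - y) :=
          Summable.tsum_le_tsum hpt hsum (summable_iv_sub k)
      _ = Z2 := tsum_iv_sub k
  · have hm : k + x ≠ 0 := fun h => hx (by omega)
    have habs : ∀ y : ℤ, |k + x| ≤ |x + y| + |k - y| := by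
      intro y
      have h : (k + x : ℤ) = (x + y) + (k - y) := by ring
      rw [h]; exact abs_add_le _ _
    have h := sum_iv_mul (u := fun y => x + y) (v := fun y => k - y) hm habs
      (summable_iv_add x) (summable_iv_sub k) (le_of_eq (tsum_iv_add x))
      (le_of_eq (tsum_iv_sub k))
    refine ⟨h.1, ?_⟩
    simp only [if_neg hx]
    exact h.2

/-- Bound for the `(α,β,γ)` multiplier sum. -/
lemma T1_bound (k : ℤ) (hk : k ≠ 0) :
    Summable (fun p : ℤ × ℤ => iv (k - p.1) * (iv (p.1 + p.2) * iv (k - p.2))) ∧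
    ∑' p : ℤ × ℤ, iv (k - p.1) * (iv (p.1 + p.2) * iv (k - p.2)) ≤
      (Z2 + 64 * Z2 ^ 2) * iv k := by
  have h2k : (2 : ℤ) * k ≠ 0 := by omega
  have houter := sum_iv_mul (u := fun x : ℤ => k - x) (v := fun x : ℤ => k + x) h2k
    (fun x => by
      have h : (2 * k : ℤ) = (k - x) + (k + x) := by ring
      rw [h]; exact abs_add_le _ _)
    (summable_iv_sub k) (summable_iv_add k) (le_of_eq (tsum_iv_sub k))
    (le_of_eq (tsum_iv_add k))
  set g : ℤ → ℝ := fun x =>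
    (if x = -k then Z2 * iv (2 * k) else 0) + 8 * Z2 * (iv (k - x) * iv (k + x)) with hg
  have hgsum : Summable g := by
    apply Summable.add
    · exact summable_of_ne_finset_zero (s := {-k}) (fun x hx => by
        simp only [Finset.mem_singleton] at hx; simp [if_neg hx])
    · exact houter.1.mul_left _
  have hrow : ∀ x : ℤ, Summable (fun y => iv (k - x) * (iv (x + y) * iv (k - y))) :=
    fun x => ((inner_bound k x hk).1.mul_left _)
  have hbound : ∀ x : ℤ, ∑' y, iv (k - x) * (iv (x + y) * iv (k - y)) ≤ g x := by
    intro x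
    rw [tsum_mul_left]
    by_cases hx : x = -k
    · subst hx
      have h1 := (inner_bound k (-k) hk).2
      simp only [if_pos rfl] at h1
      have h2 : iv (k - -k) = iv (2 * k) := by norm_num [two_mul]
      have h3 : iv (k + -k) = 0 := by norm_num [iv_zero]
      rw [hg]
      simp only [if_pos rfl, h3, mul_zero, add_zero]
      calc iv (k - -k) * ∑' y, iv (-k + y) * iv (k - y) ≤ iv (k - -k) * Z2 :=
            mul_le_mul_of_nonneg_left h1 (iv_nonneg _)
        _ = Z2 * iv (2 * k) := by rw [h2]; ring
    · have h1 := (inner_bound k x hk).2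
      simp only [if_neg hx] at h1
      rw [hg]
      simp only [if_neg hx, zero_add]
      calc iv (k - x) * ∑' y, iv (x + y) * iv (k - y)
            ≤ iv (k - x) * (8 * Z2 * iv (k + x)) :=
            mul_le_mul_of_nonneg_left h1 (iv_nonneg _)
        _ = 8 * Z2 * (iv (k - x) * iv (k + x)) := by ring
  have hmain := tsum_prod_le
    (f := fun p : ℤ × ℤ => iv (k - p.1) * (iv (p.1 + p.2) * iv (k - p.2)))
    (fun p => mul_nonneg (iv_nonneg _) (mul_nonneg (iv_nonneg _) (iv_nonneg _)))
    hgsum hrow hbound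
  refine ⟨hmain.1, le_trans hmain.2 ?_⟩
  have htg : ∑' x, g x = Z2 * iv (2 * k) + 8 * Z2 * ∑' x, iv (k - x) * iv (k + x) := by
    rw [hg, Summable.tsum_add (summable_of_ne_finset_zero (s := {-k}) (fun x hx => by
        simp only [Finset.mem_singleton] at hx; simp [if_neg hx]))
      (houter.1.mul_left _), tsum_ite_eq, tsum_mul_left]
  rw [htg]
  have h4 := houter.2
  have h5 := iv_two_mul_le k
  nlinarith [Z2_nonneg, iv_nonneg (2 * k), iv_nonneg k,
    tsum_nonneg (L := SummationFilter.unconditional ℤ) (fun x : ℤ => mul_nonneg (iv_nonneg (k - x)) (iv_nonneg (k + x)))]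

end B4Aux
namespace B4Aux

/-- Bound for the `(k₁,α,β)` multiplier sum. -/
lemma T2_bound (k : ℤ) (hk : k ≠ 0) :
    Summable (fun p : ℤ × ℤ => iv p.1 * (iv (p.1 + p.2) * iv (k - p.2))) ∧
    ∑' p : ℤ × ℤ, iv p.1 * (iv (p.1 + p.2) * iv (k - p.2)) ≤
      (Z2 + 64 * Z2 ^ 2) * iv k := by
  have houter := sum_iv_mul (u := fun x : ℤ => x) (v := fun x : ℤ => k + x) hk
    (fun x => by
      have h : |k| = |(k + x) - x| := by congr 1; ring
      rw [h, add_comm |x| _]; exact abs_sub _ _)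
    summable_iv (summable_iv_add k) le_rfl (le_of_eq (tsum_iv_add k))
  set g : ℤ → ℝ := fun x =>
    (if x = -k then Z2 * iv k else 0) + 8 * Z2 * (iv x * iv (k + x)) with hg
  have hgsum : Summable g := by
    apply Summable.add
    · exact summable_of_ne_finset_zero (s := {-k}) (fun x hx => by
        simp only [Finset.mem_singleton] at hx; simp [if_neg hx])
    · exact houter.1.mul_left _
  have hrow : ∀ x : ℤ, Summable (fun y => iv x * (iv (x + y) * iv (k - y))) :=
    fun x => ((inner_bound k x hk).1.mul_left _)
  have hbound : ∀ x : ℤ, ∑' y, iv x * (iv (x + y) * iv (k - y)) ≤ g x := by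
    intro x
    rw [tsum_mul_left]
    by_cases hx : x = -k
    · subst hx
      have h1 := (inner_bound k (-k) hk).2
      simp only [if_pos rfl] at h1
      have h3 : iv (k + -k) = 0 := by norm_num [iv_zero]
      rw [hg]
      simp only [if_pos rfl, h3, mul_zero, add_zero]
      calc iv (-k) * ∑' y, iv (-k + y) * iv (k - y) ≤ iv (-k) * Z2 :=
            mul_le_mul_of_nonneg_left h1 (iv_nonneg _)
        _ = Z2 * iv k := by rw [iv_neg]; ring
    · have h1 := (inner_bound k x hk).2
      simp only [if_neg hx] at h1
      rw [hg]
      simp only [if_neg hx, zero_add]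
      calc iv x * ∑' y, iv (x + y) * iv (k - y)
            ≤ iv x * (8 * Z2 * iv (k + x)) :=
            mul_le_mul_of_nonneg_left h1 (iv_nonneg _)
        _ = 8 * Z2 * (iv x * iv (k + x)) := by ring
  have hmain := tsum_prod_le
    (f := fun p : ℤ × ℤ => iv p.1 * (iv (p.1 + p.2) * iv (k - p.2)))
    (fun p => mul_nonneg (iv_nonneg _) (mul_nonneg (iv_nonneg _) (iv_nonneg _)))
    hgsum hrow hbound
  refine ⟨hmain.1, le_trans hmain.2 ?_⟩
  have htg : ∑' x, g x = Z2 * iv k + 8 * Z2 * ∑' x, iv x * iv (k + x) := by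
    rw [hg, Summable.tsum_add (summable_of_ne_finset_zero (s := {-k}) (fun x hx => by
        simp only [Finset.mem_singleton] at hx; simp [if_neg hx]))
      (houter.1.mul_left _), tsum_ite_eq, tsum_mul_left]
  rw [htg]
  have h4 := houter.2
  nlinarith [Z2_nonneg, iv_nonneg k,
    tsum_nonneg (L := SummationFilter.unconditional ℤ) (fun x : ℤ => mul_nonneg (iv_nonneg x) (iv_nonneg (k + x)))]

/-- Bound for the `(k₁,β,γ)` multiplier sum. -/
lemma T3_bound (k : ℤ) (hk : k ≠ 0) :
    Summable (fun p : ℤ × ℤ => (iv p.1 * iv (k - p.1)) * iv (k - p.2)) ∧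
    ∑' p : ℤ × ℤ, (iv p.1 * iv (k - p.1)) * iv (k - p.2) ≤ 8 * Z2 ^ 2 * iv k := by
  have houter := sum_iv_mul (u := fun x : ℤ => x) (v := fun x : ℤ => k - x) hk
    (fun x => by
      have h : |k| = |x + (k - x)| := by congr 1; ring
      rw [h]; exact abs_add_le _ _)
    summable_iv (summable_iv_sub k) le_rfl (le_of_eq (tsum_iv_sub k))
  set g : ℤ → ℝ := fun x => (iv x * iv (k - x)) * Z2 with hg
  have hgsum : Summable g := houter.1.mul_right _
  have hrow : ∀ x : ℤ, Summable (fun y => (iv x * iv (k - x)) * iv (k - y)) :=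
    fun x => ((summable_iv_sub k).mul_left _)
  have hbound : ∀ x : ℤ, ∑' y, (iv x * iv (k - x)) * iv (k - y) ≤ g x := by
    intro x
    rw [tsum_mul_left, tsum_iv_sub k]
  have hmain := tsum_prod_le
    (f := fun p : ℤ × ℤ => (iv p.1 * iv (k - p.1)) * iv (k - p.2))
    (fun p => mul_nonneg (mul_nonneg (iv_nonneg _) (iv_nonneg _)) (iv_nonneg _))
    hgsum hrow hbound
  refine ⟨hmain.1, le_trans hmain.2 ?_⟩
  have htg : ∑' x, g x = (∑' x, iv x * iv (k - x)) * Z2 := tsum_mul_right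
  rw [htg]
  have h4 := houter.2
  nlinarith [Z2_nonneg, iv_nonneg k]

end B4Aux
namespace B4Aux
open MeasureTheory

lemma ennreal_cs {ι : Type*} [MeasurableSpace ι] [MeasurableSingletonClass ι] [Countable ι]
    (f g : ι → ENNReal) :
    ∑' i, f i * g i ≤ (∑' i, f i ^ 2) ^ (1/2 : ℝ) * (∑' i, g i ^ 2) ^ (1/2 : ℝ) := by
  have hpq : Real.HolderConjugate 2 2 := Real.holderConjugate_iff.mpr ⟨one_lt_two, by norm_num⟩
  have h := ENNReal.lintegral_mul_le_Lp_mul_Lq (Measure.count (α := ι)) hpq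
    (measurable_of_countable f).aemeasurable (measurable_of_countable g).aemeasurable
  simp only [Pi.mul_apply, lintegral_count] at h
  have h2 : ∀ x : ENNReal, x ^ (2:ℝ) = x ^ (2:ℕ) := fun x => by
    rw [show ((2:ℝ)) = ((2:ℕ):ℝ) by norm_num, ENNReal.rpow_natCast]
  simp only [h2] at h
  exact h

lemma enn_norm_tsum_le {ι : Type*} (f : ι → ℂ) :
    (‖∑' i, f i‖₊ : ENNReal) ≤ ∑' i, (‖f i‖₊ : ENNReal) := by
  by_cases h : Summable (fun i => ‖f i‖)
  · have h1 : ‖∑' i, f i‖ ≤ ∑' i, ‖f i‖ := norm_tsum_le_tsum_norm h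
    rw [← ofReal_norm_eq_coe_nnnorm]
    calc ENNReal.ofReal ‖∑' i, f i‖ ≤ ENNReal.ofReal (∑' i, ‖f i‖) :=
          ENNReal.ofReal_le_ofReal h1
      _ = ∑' i, ENNReal.ofReal ‖f i‖ :=
          ENNReal.ofReal_tsum_of_nonneg (fun i => norm_nonneg _) h
      _ = ∑' i, (‖f i‖₊ : ENNReal) := tsum_congr fun i => ofReal_norm_eq_coe_nnnorm _
  · have h2 : ¬ Summable f := fun hs => h (summable_norm_iff.mpr hs)
    rw [tsum_eq_zero_of_not_summable h2]
    simp

lemma conv_bound (c d : ℤ → ENNReal) (m : ℤ) :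
    ∑' n : ℤ, c n * d (m - n) ≤
      (∑' n, c n ^ 2) ^ (1/2 : ℝ) * (∑' n, d n ^ 2) ^ (1/2 : ℝ) := by
  calc ∑' n : ℤ, c n * d (m - n)
      ≤ (∑' n, c n ^ 2) ^ (1/2 : ℝ) * (∑' n, d (m - n) ^ 2) ^ (1/2 : ℝ) :=
        ennreal_cs c (fun n => d (m - n))
    _ = (∑' n, c n ^ 2) ^ (1/2 : ℝ) * (∑' n, d n ^ 2) ^ (1/2 : ℝ) := by
        rw [show (∑' n : ℤ, d (m - n) ^ 2) = ∑' n, d n ^ 2 from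
          Equiv.tsum_eq (eSub m) (fun n => d n ^ 2)]

lemma chain {a b c d : ℤ → ENNReal} {μ : ℤ × ℤ → ENNReal} {G : ℤ × ℤ × ℤ → ENNReal} (k : ℤ)
    (hG : ∀ q : ℤ × ℤ × ℤ,
      G q ≤ a q.1 * b q.2.1 * μ (q.1, q.2.1) * (c q.2.2 * d (k - q.1 - q.2.1 - q.2.2))) :
    ∑' q : ℤ × ℤ × ℤ, G q ≤
      ((∑' n, a n ^ 2) * (∑' n, b n ^ 2) * (∑' n, c n ^ 2) * (∑' n, d n ^ 2) *
        (∑' p : ℤ × ℤ, μ p ^ 2)) ^ (1/2 : ℝ) := by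
  set Na := ∑' n, a n ^ 2 with hNa
  set Nb := ∑' n, b n ^ 2 with hNb
  set Nc := ∑' n, c n ^ 2 with hNc
  set Nd := ∑' n, d n ^ 2 with hNd
  set Nm := ∑' p : ℤ × ℤ, μ p ^ 2 with hNm
  have step1 : ∑' q : ℤ × ℤ × ℤ, G q ≤
      ∑' q : ℤ × ℤ × ℤ, a q.1 * b q.2.1 * μ (q.1, q.2.1) *
        (c q.2.2 * d (k - q.1 - q.2.1 - q.2.2)) := ENNReal.tsum_le_tsum hG
  have step2 : ∑' q : ℤ × ℤ × ℤ, a q.1 * b q.2.1 * μ (q.1, q.2.1) *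
        (c q.2.2 * d (k - q.1 - q.2.1 - q.2.2)) =
      ∑' x : ℤ, ∑' y : ℤ, ∑' z : ℤ, a x * b y * μ (x, y) * (c z * d (k - x - y - z)) := by
    rw [ENNReal.tsum_prod (f := fun (x : ℤ) (r : ℤ × ℤ) =>
      a x * b r.1 * μ (x, r.1) * (c r.2 * d (k - x - r.1 - r.2)))]
    exact tsum_congr fun x => ENNReal.tsum_prod (f := fun (y z : ℤ) =>
      a x * b y * μ (x, y) * (c z * d (k - x - y - z)))
  have hinner : ∀ x y : ℤ,
      ∑' z : ℤ, a x * b y * μ (x, y) * (c z * d (k - x - y - z)) ≤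
        a x * b y * μ (x, y) * (Nc ^ (1/2 : ℝ) * Nd ^ (1/2 : ℝ)) := by
    intro x y
    rw [ENNReal.tsum_mul_left]
    exact mul_le_mul_right (conv_bound c d (k - x - y)) _
  have step3 : ∑' x : ℤ, ∑' y : ℤ, ∑' z : ℤ, a x * b y * μ (x, y) *
        (c z * d (k - x - y - z)) ≤
      Nc ^ (1/2 : ℝ) * Nd ^ (1/2 : ℝ) * ∑' p : ℤ × ℤ, a p.1 * b p.2 * μ p := by
    calc ∑' x : ℤ, ∑' y : ℤ, ∑' z : ℤ, a x * b y * μ (x, y) * (c z * d (k - x - y - z))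
        ≤ ∑' x : ℤ, ∑' y : ℤ, a x * b y * μ (x, y) * (Nc ^ (1/2:ℝ) * Nd ^ (1/2:ℝ)) :=
          ENNReal.tsum_le_tsum fun x => ENNReal.tsum_le_tsum fun y => hinner x y
      _ = ∑' x : ℤ, ∑' y : ℤ, (Nc ^ (1/2:ℝ) * Nd ^ (1/2:ℝ)) * (a x * b y * μ (x, y)) :=
          tsum_congr fun x => tsum_congr fun y => mul_comm _ _
      _ = (Nc ^ (1/2:ℝ) * Nd ^ (1/2:ℝ)) * ∑' x : ℤ, ∑' y : ℤ, a x * b y * μ (x, y) := by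
          rw [← ENNReal.tsum_mul_left]
          exact tsum_congr fun x => by rw [ENNReal.tsum_mul_left]
      _ = Nc ^ (1/2:ℝ) * Nd ^ (1/2:ℝ) * ∑' p : ℤ × ℤ, a p.1 * b p.2 * μ p := by
          rw [← ENNReal.tsum_prod (f := fun (x y : ℤ) => a x * b y * μ (x, y))]
  have step4 : ∑' p : ℤ × ℤ, a p.1 * b p.2 * μ p ≤
      (Na * Nb) ^ (1/2:ℝ) * Nm ^ (1/2:ℝ) := by
    have hcs := ennreal_cs (fun p : ℤ × ℤ => a p.1 * b p.2) μ
    have hab : ∑' p : ℤ × ℤ, (a p.1 * b p.2) ^ 2 = Na * Nb := by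
      calc ∑' p : ℤ × ℤ, (a p.1 * b p.2) ^ 2
          = ∑' p : ℤ × ℤ, a p.1 ^ 2 * b p.2 ^ 2 := tsum_congr fun p => mul_pow _ _ 2
        _ = ∑' x : ℤ, ∑' y : ℤ, a x ^ 2 * b y ^ 2 :=
            ENNReal.tsum_prod (f := fun x y => a x ^ 2 * b y ^ 2)
        _ = ∑' x : ℤ, a x ^ 2 * Nb := tsum_congr fun x => ENNReal.tsum_mul_left
        _ = Na * Nb := ENNReal.tsum_mul_right
    rw [hab] at hcs
    exact hcs
  have hrw : (Na * Nb * Nc * Nd * Nm) ^ (1/2:ℝ) =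
      (Na * Nb) ^ (1/2:ℝ) * Nc ^ (1/2:ℝ) * Nd ^ (1/2:ℝ) * Nm ^ (1/2:ℝ) := by
    rw [ENNReal.mul_rpow_of_nonneg _ _ (by norm_num : (0:ℝ) ≤ 1/2),
      ENNReal.mul_rpow_of_nonneg _ _ (by norm_num : (0:ℝ) ≤ 1/2),
      ENNReal.mul_rpow_of_nonneg _ _ (by norm_num : (0:ℝ) ≤ 1/2)]
  calc ∑' q : ℤ × ℤ × ℤ, G q
      ≤ ∑' x : ℤ, ∑' y : ℤ, ∑' z : ℤ, a x * b y * μ (x, y) * (c z * d (k - x - y - z)) :=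
        step1.trans (le_of_eq step2)
    _ ≤ Nc ^ (1/2:ℝ) * Nd ^ (1/2:ℝ) * ∑' p : ℤ × ℤ, a p.1 * b p.2 * μ p := step3
    _ ≤ Nc ^ (1/2:ℝ) * Nd ^ (1/2:ℝ) * ((Na * Nb) ^ (1/2:ℝ) * Nm ^ (1/2:ℝ)) :=
        mul_le_mul_right step4 _
    _ = (Na * Nb * Nc * Nd * Nm) ^ (1/2:ℝ) := by
        rw [hrw]
        generalize (Na * Nb) ^ (1/2:ℝ) = A
        generalize Nc ^ (1/2:ℝ) = C
        generalize Nd ^ (1/2:ℝ) = D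
        generalize Nm ^ (1/2:ℝ) = M
        ring

end B4Aux
namespace B4Aux

lemma norm_osc4 (t : ℝ) (k1 k2 k3 k4 : ℤ) : ‖osc4 t k1 k2 k3 k4‖ = 1 := by
  have h : Complex.I * ((Phi4 k1 k2 k3 k4 : ℤ) : ℂ) * (t : ℂ) =
      ((((Phi4 k1 k2 k3 k4 : ℤ) : ℝ) * t : ℝ) : ℂ) * Complex.I := by
    push_cast; ring
  rw [osc4, h, Complex.norm_exp_ofReal_mul_I]

lemma inv_abs_sq (x : ℝ) : (|x|⁻¹) ^ 2 = (x ^ 2)⁻¹ := by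
  rw [inv_pow, sq_abs]

lemma abs_sum_le_four {k1 k2 k3 k4 : ℤ} (h1 : k1 ≠ 0) (h2 : k2 ≠ 0) (h3 : k3 ≠ 0)
    (h4 : k4 ≠ 0) : |k1 + k2 + k3 + k4| ≤ 4 * (|k1| * |k2| * |k3| * |k4|) := by
  have a1 := Int.one_le_abs h1
  have a2 := Int.one_le_abs h2
  have a3 := Int.one_le_abs h3
  have a4 := Int.one_le_abs h4
  have t1 : |k1 + k2 + k3 + k4| ≤ |k1| + |k2| + |k3| + |k4| := by
    calc |k1 + k2 + k3 + k4| ≤ |k1 + k2 + k3| + |k4| := abs_add_le _ _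
      _ ≤ (|k1 + k2| + |k3|) + |k4| := by have := abs_add_le (k1 + k2) k3; linarith
      _ ≤ ((|k1| + |k2|) + |k3|) + |k4| := by have := abs_add_le k1 k2; linarith
  have b23 : 1 ≤ |k2| * |k3| := by nlinarith
  have b234 : 1 ≤ |k2| * (|k3| * |k4|) := by nlinarith
  have b134 : 1 ≤ |k1| * (|k3| * |k4|) := by nlinarith
  have b124 : 1 ≤ |k1| * (|k2| * |k4|) := by nlinarith
  have b123 : 1 ≤ |k1| * (|k2| * |k3|) := by nlinarith
  have p1 : |k1| ≤ |k1| * |k2| * |k3| * |k4| := by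
    calc |k1| ≤ |k1| * (|k2| * (|k3| * |k4|)) :=
          le_mul_of_one_le_right (abs_nonneg _) b234
      _ = |k1| * |k2| * |k3| * |k4| := by ring
  have p2 : |k2| ≤ |k1| * |k2| * |k3| * |k4| := by
    calc |k2| ≤ |k2| * (|k1| * (|k3| * |k4|)) :=
          le_mul_of_one_le_right (abs_nonneg _) b134
      _ = |k1| * |k2| * |k3| * |k4| := by ring
  have p3 : |k3| ≤ |k1| * |k2| * |k3| * |k4| := by
    calc |k3| ≤ |k3| * (|k1| * (|k2| * |k4|)) :=
          le_mul_of_one_le_right (abs_nonneg _) b124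
      _ = |k1| * |k2| * |k3| * |k4| := by ring
  have p4 : |k4| ≤ |k1| * |k2| * |k3| * |k4| := by
    calc |k4| ≤ |k4| * (|k1| * (|k2| * |k3|)) :=
          le_mul_of_one_le_right (abs_nonneg _) b123
      _ = |k1| * |k2| * |k3| * |k4| := by ring
  have : |k1| * |k2| * |k3| * |k4| = |k1| * (|k2| * (|k3| * |k4|)) := by ring
  linarith

lemma wt_nonneg (s : ℝ) (k : ℤ) : 0 ≤ wt s k := by
  unfold wt
  positivity

lemma sum_sq_weighted (s : ℝ) (u : ℤ → ℂ) (hu : memH s u) :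
    ∑' n : ℤ,
        (if n = 0 then (0 : ENNReal) else ENNReal.ofReal (((|n| : ℤ) : ℝ) ^ s * ‖u n‖)) ^ 2
      = ENNReal.ofReal (hnorm s u ^ 2) := by
  have hwt : ∀ n : ℤ, 0 ≤ wt s n * ‖u n‖ ^ 2 :=
    fun n => mul_nonneg (wt_nonneg s n) (by positivity)
  have hpt : ∀ n : ℤ,
      (if n = 0 then (0 : ENNReal) else ENNReal.ofReal (((|n| : ℤ) : ℝ) ^ s * ‖u n‖)) ^ 2
        = (if n = 0 then (0 : ENNReal) else ENNReal.ofReal (wt s n * ‖u n‖ ^ 2)) := by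
    intro n
    by_cases h : n = 0
    · simp [h]
    · rw [if_neg h, if_neg h, ← ENNReal.ofReal_pow (by positivity)]
      congr 1
      have h1 : (1 : ℝ) ≤ ((|n| : ℤ) : ℝ) := by exact_mod_cast Int.one_le_abs h
      have hpos : (0 : ℝ) < ((|n| : ℤ) : ℝ) := lt_of_lt_of_le zero_lt_one h1
      rw [mul_pow, wt]
      congr 1
      rw [← Real.rpow_natCast (((|n| : ℤ) : ℝ) ^ s) 2, ← Real.rpow_mul hpos.le]
      norm_num [mul_comm]
  rw [tsum_congr hpt]
  have hsupp : Function.support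
      (fun n : ℤ => if n = 0 then (0 : ENNReal) else ENNReal.ofReal (wt s n * ‖u n‖ ^ 2))
      ⊆ {n : ℤ | n ≠ 0} := by
    intro n hn
    simp only [Function.mem_support] at hn
    intro h0
    exact hn (by simp [h0])
  rw [← tsum_subtype_eq_of_support_subset hsupp]
  have hcongr : ∀ x : {n : ℤ | n ≠ 0},
      (if (x : ℤ) = 0 then (0 : ENNReal) else ENNReal.ofReal (wt s x * ‖u x‖ ^ 2))
        = ENNReal.ofReal (wt s x * ‖u x‖ ^ 2) := fun x => if_neg x.2
  rw [tsum_congr hcongr]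
  have hsum : Summable (fun x : {n : ℤ | n ≠ 0} => wt s (x : ℤ) * ‖u (x : ℤ)‖ ^ 2) := hu
  have h2 := ENNReal.ofReal_tsum_of_nonneg (fun x : {n : ℤ | n ≠ 0} => hwt x.1) hsum
  rw [← h2]
  congr 1
  rw [hnorm, Real.sq_sqrt (tsum_nonneg fun x : {k : ℤ // k ≠ 0} => hwt x.1)]
  exact tsum_congr fun x => rfl

end B4Aux
namespace B4Aux

noncomputable def CT : ℝ := 3 * (2 * (Z2 + 64 * Z2 ^ 2) + 8 * Z2 ^ 2)

lemma CT_nonneg : 0 ≤ CT := by unfold CT; nlinarith [Z2_nonneg]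

lemma rpow_sq_comm {x : ℝ} (hx : 0 ≤ x) (u : ℝ) : (x ^ u) ^ 2 = x ^ (2 * u) := by
  rw [← Real.rpow_natCast (x ^ u) 2, ← Real.rpow_mul hx]
  norm_num [mul_comm]

lemma ennreal_half_sq (X : ENNReal) : (X ^ (1/2 : ℝ)) ^ 2 = X := by
  rw [← ENNReal.rpow_natCast (X ^ (1/2 : ℝ)) 2, ← ENNReal.rpow_mul]
  norm_num

lemma mu_sq_sum_le (k : ℤ) (hk : k ≠ 0) (c2 : ℝ) (hc2 : 0 ≤ c2) (μ : ℤ × ℤ → ENNReal)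
    (hμ : ∀ p : ℤ × ℤ, μ p ^ 2 ≤ ENNReal.ofReal (c2 *
      (3 * (iv p.1 * (iv (p.1 + p.2) * iv (k - p.2)) +
            (iv p.1 * iv (k - p.1)) * iv (k - p.2) +
            iv (k - p.1) * (iv (p.1 + p.2) * iv (k - p.2)))))) :
    ∑' p : ℤ × ℤ, μ p ^ 2 ≤ ENNReal.ofReal (c2 * (CT * iv k)) := by
  have hT1 := T1_bound k hk
  have hT2 := T2_bound k hk
  have hT3 := T3_bound k hk
  set Tf : ℤ × ℤ → ℝ := fun p =>
    iv p.1 * (iv (p.1 + p.2) * iv (k - p.2)) +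
      (iv p.1 * iv (k - p.1)) * iv (k - p.2) +
      iv (k - p.1) * (iv (p.1 + p.2) * iv (k - p.2)) with hTf
  have hTfsum : Summable Tf := (hT2.1.add hT3.1).add hT1.1
  have hsum2 : Summable (fun p => c2 * (3 * Tf p)) := (hTfsum.mul_left 3).mul_left c2
  have hnn : ∀ p : ℤ × ℤ, 0 ≤ c2 * (3 * Tf p) := by
    intro p
    have := iv_nonneg p.1
    have := iv_nonneg (p.1 + p.2)
    have := iv_nonneg (k - p.2)
    have := iv_nonneg (k - p.1)
    rw [hTf]
    positivity
  calc ∑' p : ℤ × ℤ, μ p ^ 2 ≤ ∑' p : ℤ × ℤ, ENNReal.ofReal (c2 * (3 * Tf p)) :=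
        ENNReal.tsum_le_tsum hμ
    _ = ENNReal.ofReal (∑' p : ℤ × ℤ, c2 * (3 * Tf p)) :=
        (ENNReal.ofReal_tsum_of_nonneg hnn hsum2).symm
    _ ≤ ENNReal.ofReal (c2 * (CT * iv k)) := by
        apply ENNReal.ofReal_le_ofReal
        rw [tsum_mul_left, tsum_mul_left]
        have hsplit : ∑' p, Tf p =
            (∑' p : ℤ × ℤ, iv p.1 * (iv (p.1 + p.2) * iv (k - p.2))) +
            (∑' p : ℤ × ℤ, (iv p.1 * iv (k - p.1)) * iv (k - p.2)) +
            (∑' p : ℤ × ℤ, iv (k - p.1) * (iv (p.1 + p.2) * iv (k - p.2))) := by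
          rw [hTf, Summable.tsum_add (hT2.1.add hT3.1) hT1.1, Summable.tsum_add hT2.1 hT3.1]
        rw [hsplit]
        have h1 := hT1.2
        have h2 := hT2.2
        have h3 := hT3.2
        have : CT * iv k = 3 * ((Z2 + 64 * Z2 ^ 2) * iv k + 8 * Z2 ^ 2 * iv k +
            (Z2 + 64 * Z2 ^ 2) * iv k) := by unfold CT; ring
        rw [this]
        have hmono : (∑' p : ℤ × ℤ, iv p.1 * (iv (p.1 + p.2) * iv (k - p.2))) +
            (∑' p : ℤ × ℤ, (iv p.1 * iv (k - p.1)) * iv (k - p.2)) +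
            (∑' p : ℤ × ℤ, iv (k - p.1) * (iv (p.1 + p.2) * iv (k - p.2))) ≤
            (Z2 + 64 * Z2 ^ 2) * iv k + 8 * Z2 ^ 2 * iv k + (Z2 + 64 * Z2 ^ 2) * iv k := by
          linarith
        exact mul_le_mul_of_nonneg_left
          (mul_le_mul_of_nonneg_left hmono (by norm_num : (0:ℝ) ≤ 3)) hc2


end B4Aux
namespace B4Aux

lemma ofReal_prod_le5 {x ra rb rm rc rd : ℝ} (hra : 0 ≤ ra) (hrb : 0 ≤ rb) (hrm : 0 ≤ rm)
    (hrc : 0 ≤ rc) (hle : x ≤ ra * rb * rm * (rc * rd)) :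
    ENNReal.ofReal x ≤ ENNReal.ofReal ra * ENNReal.ofReal rb * ENNReal.ofReal rm *
      (ENNReal.ofReal rc * ENNReal.ofReal rd) := by
  rw [← ENNReal.ofReal_mul hra, ← ENNReal.ofReal_mul (mul_nonneg hra hrb),
    ← ENNReal.ofReal_mul hrc, ← ENNReal.ofReal_mul (mul_nonneg (mul_nonneg hra hrb) hrm)]
  exact ENNReal.ofReal_le_ofReal hle

lemma abs_triple (k k1 k2 : ℤ) : |k - k1 - k2| ≤ |k - k1| + |k1 + k2| + |k1| := by
  have h : k - k1 - k2 = ((k - k1) - (k1 + k2)) + k1 := by ring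
  calc |k - k1 - k2| = |((k - k1) - (k1 + k2)) + k1| := by rw [← h]
    _ ≤ |(k - k1) - (k1 + k2)| + |k1| := abs_add_le _ _
    _ ≤ |k - k1| + |k1 + k2| + |k1| := by
        have := abs_sub (k - k1) (k1 + k2); linarith

lemma rk_pow_bound {s ε : ℝ} (hs : 0 ≤ s) {k n1 n2 n3 n4 : ℤ} (hk : k ≠ 0)
    (h1 : n1 ≠ 0) (h2 : n2 ≠ 0) (h3 : n3 ≠ 0) (h4 : n4 ≠ 0)
    (hsum : n1 + n2 + n3 + n4 = k) :
    ((|k| : ℤ) : ℝ) ^ (s + ε) ≤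
      (4 : ℝ) ^ s * (((|n1| : ℤ) : ℝ) ^ s * (((|n2| : ℤ) : ℝ) ^ s *
        (((|n3| : ℤ) : ℝ) ^ s * ((|n4| : ℤ) : ℝ) ^ s))) * ((|k| : ℤ) : ℝ) ^ ε := by
  have habs0 : ∀ n : ℤ, (0:ℝ) ≤ ((|n| : ℤ) : ℝ) := fun n => by exact_mod_cast abs_nonneg n
  have hrk1 : (1:ℝ) ≤ ((|k| : ℤ) : ℝ) := by exact_mod_cast Int.one_le_abs hk
  have hrk0 : (0:ℝ) < ((|k| : ℤ) : ℝ) := lt_of_lt_of_le zero_lt_one hrk1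
  have hZ : |k| ≤ 4 * (|n1| * (|n2| * (|n3| * |n4|))) := by
    have h := abs_sum_le_four h1 h2 h3 h4
    rw [hsum] at h
    have e : 4 * (|n1| * |n2| * |n3| * |n4|) = 4 * (|n1| * (|n2| * (|n3| * |n4|))) := by ring
    linarith [e ▸ h]
  have hR : ((|k| : ℤ) : ℝ) ≤ 4 * (((|n1| : ℤ) : ℝ) * (((|n2| : ℤ) : ℝ) *
      (((|n3| : ℤ) : ℝ) * ((|n4| : ℤ) : ℝ)))) := by exact_mod_cast hZ
  have h1s : ((|k| : ℤ) : ℝ) ^ s ≤ (4 * (((|n1| : ℤ) : ℝ) * (((|n2| : ℤ) : ℝ) *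
      (((|n3| : ℤ) : ℝ) * ((|n4| : ℤ) : ℝ))))) ^ s :=
    Real.rpow_le_rpow (habs0 k) hR hs
  rw [Real.mul_rpow (by norm_num) (by positivity), Real.mul_rpow (habs0 n1) (by positivity),
    Real.mul_rpow (habs0 n2) (by positivity), Real.mul_rpow (habs0 n3) (habs0 n4)] at h1s
  rw [Real.rpow_add hrk0 s ε]
  exact mul_le_mul_of_nonneg_right h1s (Real.rpow_nonneg hrk0.le ε)

end B4Aux
namespace B4Aux

lemma sum3_sq_le (x y z a b c : ℝ) (hx : x ^ 2 = a) (hy : y ^ 2 = b) (hz : z ^ 2 = c) :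
    (x + y + z) ^ 2 ≤ 3 * (a + b + c) := by
  subst hx hy hz
  nlinarith [sq_nonneg (x - y), sq_nonneg (y - z), sq_nonneg (x - z)]

set_option maxHeartbeats 1000000 in
lemma key_bound {s ε : ℝ} (hs : 0 ≤ s) (t : ℝ) {φ ψ ξ η : ℤ → ℂ}
    (hφ : memH s φ) (hψ : memH s ψ) (hξ : memH s ξ) (hη : memH s η) {k : ℤ} (hk : k ≠ 0) :
    wt (s + ε) k * ‖B4 t φ ψ ξ η k‖ ^ 2 ≤
      4 * (16:ℝ) ^ s * CT * (hnorm s φ * hnorm s ψ * hnorm s ξ * hnorm s η) ^ 2 *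
        (((|k| : ℤ) : ℝ) ^ (2 * ε) * iv k) := by
  have habs0 : ∀ n : ℤ, (0:ℝ) ≤ ((|n| : ℤ) : ℝ) := fun n => by exact_mod_cast abs_nonneg n
  have hrk1 : (1:ℝ) ≤ ((|k| : ℤ) : ℝ) := by exact_mod_cast Int.one_le_abs hk
  have hrk0 : (0:ℝ) < ((|k| : ℤ) : ℝ) := lt_of_lt_of_le zero_lt_one hrk1
  have hw0 : ∀ (u : ℤ → ℂ) (n : ℤ), 0 ≤ ((|n| : ℤ) : ℝ) ^ s * ‖u n‖ :=
    fun u n => mul_nonneg (Real.rpow_nonneg (habs0 n) s) (norm_nonneg _)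
  set W : ENNReal := ENNReal.ofReal (((|k| : ℤ) : ℝ) ^ (s + ε)) with hW
  set aF : ℤ → ENNReal :=
    fun n => if n = 0 then 0 else ENNReal.ofReal (((|n| : ℤ) : ℝ) ^ s * ‖φ n‖) with haF
  set bF : ℤ → ENNReal :=
    fun n => if n = 0 then 0 else ENNReal.ofReal (((|n| : ℤ) : ℝ) ^ s * ‖ψ n‖) with hbF
  set cF : ℤ → ENNReal :=
    fun n => if n = 0 then 0 else ENNReal.ofReal (((|n| : ℤ) : ℝ) ^ s * ‖ξ n‖) with hcF
  set dF : ℤ → ENNReal :=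
    fun n => if n = 0 then 0 else ENNReal.ofReal (((|n| : ℤ) : ℝ) ^ s * ‖η n‖) with hdF
  set m1 : ℤ × ℤ → ℝ := fun p =>
    (|((p.1 + p.2 : ℤ) : ℝ)| * |((k - p.2 : ℤ) : ℝ)| * |((k - p.1 : ℤ) : ℝ)|)⁻¹ with hm1
  set m2 : ℤ × ℤ → ℝ := fun p =>
    |((p.1 : ℤ) : ℝ)|⁻¹ * (|((p.1 + p.2 : ℤ) : ℝ)|⁻¹ * |((k - p.2 : ℤ) : ℝ)|⁻¹) +
    |((p.1 : ℤ) : ℝ)|⁻¹ * |((k - p.1 : ℤ) : ℝ)|⁻¹ * |((k - p.2 : ℤ) : ℝ)|⁻¹ +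
    |((k - p.1 : ℤ) : ℝ)|⁻¹ * (|((p.1 + p.2 : ℤ) : ℝ)|⁻¹ * |((k - p.2 : ℤ) : ℝ)|⁻¹) with hm2
  have hm1nn : ∀ p : ℤ × ℤ, 0 ≤ m1 p := fun p => by rw [hm1]; positivity
  have hm2nn : ∀ p : ℤ × ℤ, 0 ≤ m2 p := fun p => by rw [hm2]; positivity
  set μ1 : ℤ × ℤ → ENNReal := fun p =>
    if p.1 ≠ 0 ∧ p.2 ≠ 0 ∧ p.1 + p.2 ≠ 0 ∧ k - p.2 ≠ 0 ∧ k - p.1 ≠ 0 then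
      ENNReal.ofReal ((4:ℝ) ^ s * ((|k| : ℤ) : ℝ) ^ ε * m1 p) else 0 with hμ1
  set μ2 : ℤ × ℤ → ENNReal := fun p =>
    if p.1 ≠ 0 ∧ p.2 ≠ 0 ∧ p.1 + p.2 ≠ 0 ∧ k - p.2 ≠ 0 ∧ k - p.1 ≠ 0 then
      ENNReal.ofReal ((4:ℝ) ^ s * ((|k| : ℤ) : ℝ) ^ ε * m2 p) else 0 with hμ2
  set F1 : ℤ × ℤ × ℤ → ℂ := fun q =>
    if q.1 ≠ 0 ∧ q.2.1 ≠ 0 ∧ q.2.2 ≠ 0 ∧ k - q.1 - q.2.1 - q.2.2 ≠ 0 ∧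
        (q.1 + q.2.1) * (q.1 + q.2.2 + (k - q.1 - q.2.1 - q.2.2)) *
          (q.2.1 + q.2.2 + (k - q.1 - q.2.1 - q.2.2)) ≠ 0 then
      osc4 t q.1 q.2.1 q.2.2 (k - q.1 - q.2.1 - q.2.2) * φ q.1 * ψ q.2.1 * ξ q.2.2 *
          η (k - q.1 - q.2.1 - q.2.2) /
        (((q.1 + q.2.1 : ℤ) : ℂ) * ((q.1 + q.2.2 + (k - q.1 - q.2.1 - q.2.2) : ℤ) : ℂ) *
          ((q.2.1 + q.2.2 + (k - q.1 - q.2.1 - q.2.2) : ℤ) : ℂ))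
    else 0 with hF1
  set F2 : ℤ × ℤ × ℤ → ℂ := fun q =>
    if q.1 ≠ 0 ∧ q.2.1 ≠ 0 ∧ q.2.2 ≠ 0 ∧ k - q.1 - q.2.1 - q.2.2 ≠ 0 ∧
        (q.1 + q.2.1) * (q.1 + q.2.2 + (k - q.1 - q.2.1 - q.2.2)) *
          (q.2.1 + q.2.2 + (k - q.1 - q.2.1 - q.2.2)) ≠ 0 then
      osc4 t q.1 q.2.1 q.2.2 (k - q.1 - q.2.1 - q.2.2) *
          ((q.2.2 + (k - q.1 - q.2.1 - q.2.2) : ℤ) : ℂ) * φ q.1 * ψ q.2.1 * ξ q.2.2 *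
          η (k - q.1 - q.2.1 - q.2.2) /
        (((q.1 : ℤ) : ℂ) * ((q.1 + q.2.1 : ℤ) : ℂ) *
          ((q.1 + q.2.2 + (k - q.1 - q.2.1 - q.2.2) : ℤ) : ℂ) *
          ((q.2.1 + q.2.2 + (k - q.1 - q.2.1 - q.2.2) : ℤ) : ℂ))
    else 0 with hF2
  have hB41 : B41 t φ ψ ξ η k = ∑' q : ℤ × ℤ × ℤ, F1 q := by rw [hF1]; rfl
  have hB42 : B42 t φ ψ ξ η k = ∑' q : ℤ × ℤ × ℤ, F2 q := by rw [hF2]; rfl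
  have hG1 : ∀ q : ℤ × ℤ × ℤ, W * (‖F1 q‖₊ : ENNReal) ≤
      aF q.1 * bF q.2.1 * μ1 (q.1, q.2.1) *
        (cF q.2.2 * dF (k - q.1 - q.2.1 - q.2.2)) := by
    intro q
    by_cases hc : q.1 ≠ 0 ∧ q.2.1 ≠ 0 ∧ q.2.2 ≠ 0 ∧ k - q.1 - q.2.1 - q.2.2 ≠ 0 ∧
        (q.1 + q.2.1) * (q.1 + q.2.2 + (k - q.1 - q.2.1 - q.2.2)) *
          (q.2.1 + q.2.2 + (k - q.1 - q.2.1 - q.2.2)) ≠ 0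
    case neg =>
      have hF0 : F1 q = 0 := by rw [hF1]; exact if_neg hc
      rw [hF0]
      simp
    case pos =>
      obtain ⟨h1, h2, h3, h4, h5⟩ := hc
      have e2 : (q.1 + q.2.2 + (k - q.1 - q.2.1 - q.2.2) : ℤ) = k - q.2.1 := by ring
      have e3 : (q.2.1 + q.2.2 + (k - q.1 - q.2.1 - q.2.2) : ℤ) = k - q.1 := by ring
      have hα : q.1 + q.2.1 ≠ 0 := by
        intro h; rw [h] at h5; simp at h5
      have hβ : k - q.2.1 ≠ 0 := by
        intro h; rw [e2] at h5; rw [h] at h5; simp at h5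
      have hγ : k - q.1 ≠ 0 := by
        intro h; rw [e3] at h5; rw [h] at h5; simp at h5
      have hg : (q.1, q.2.1).1 ≠ 0 ∧ (q.1, q.2.1).2 ≠ 0 ∧
          (q.1, q.2.1).1 + (q.1, q.2.1).2 ≠ 0 ∧ k - (q.1, q.2.1).2 ≠ 0 ∧
          k - (q.1, q.2.1).1 ≠ 0 := ⟨h1, h2, hα, hβ, hγ⟩
      rw [hF1]
      dsimp only
      rw [if_pos ⟨h1, h2, h3, h4, h5⟩, e2, e3]
      rw [haF, hbF, hcF, hdF, hμ1]
      dsimp only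
      rw [if_neg h1, if_neg h2, if_neg h3, if_neg h4, if_pos hg]
      rw [← ofReal_norm_eq_coe_nnnorm]
      simp only [norm_div, norm_mul, norm_osc4, one_mul, Complex.norm_intCast]
      rw [div_eq_mul_inv, hW, ← ENNReal.ofReal_mul (Real.rpow_nonneg (habs0 k) _)]
      refine ofReal_prod_le5 (hw0 φ q.1) (hw0 ψ q.2.1)
        (mul_nonneg (mul_nonneg (Real.rpow_nonneg (by norm_num) s)
          (Real.rpow_nonneg (habs0 k) ε)) (hm1nn _)) (hw0 ξ q.2.2) ?_
      rw [hm1]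
      dsimp only
      have hkey := rk_pow_bound (ε := ε) hs (k := k) hk h1 h2 h3 h4
        (by ring : q.1 + q.2.1 + q.2.2 + (k - q.1 - q.2.1 - q.2.2) = k)
      have hrest : (0:ℝ) ≤ ‖φ q.1‖ * ‖ψ q.2.1‖ * ‖ξ q.2.2‖ * ‖η (k - q.1 - q.2.1 - q.2.2)‖ *
          (|((q.1 + q.2.1 : ℤ) : ℝ)| * |((k - q.2.1 : ℤ) : ℝ)| * |((k - q.1 : ℤ) : ℝ)|)⁻¹ := by
        positivity
      calc ((|k| : ℤ) : ℝ) ^ (s + ε) *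
            (‖φ q.1‖ * ‖ψ q.2.1‖ * ‖ξ q.2.2‖ * ‖η (k - q.1 - q.2.1 - q.2.2)‖ *
              (|((q.1 + q.2.1 : ℤ) : ℝ)| * |((k - q.2.1 : ℤ) : ℝ)| * |((k - q.1 : ℤ) : ℝ)|)⁻¹)
          ≤ ((4 : ℝ) ^ s * (((|q.1| : ℤ) : ℝ) ^ s * (((|q.2.1| : ℤ) : ℝ) ^ s *
              (((|q.2.2| : ℤ) : ℝ) ^ s * ((|k - q.1 - q.2.1 - q.2.2| : ℤ) : ℝ) ^ s))) *
              ((|k| : ℤ) : ℝ) ^ ε) *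
            (‖φ q.1‖ * ‖ψ q.2.1‖ * ‖ξ q.2.2‖ * ‖η (k - q.1 - q.2.1 - q.2.2)‖ *
              (|((q.1 + q.2.1 : ℤ) : ℝ)| * |((k - q.2.1 : ℤ) : ℝ)| * |((k - q.1 : ℤ) : ℝ)|)⁻¹) :=
            mul_le_mul_of_nonneg_right hkey hrest
        _ = ((|q.1| : ℤ) : ℝ) ^ s * ‖φ q.1‖ * (((|q.2.1| : ℤ) : ℝ) ^ s * ‖ψ q.2.1‖) *
              ((4:ℝ) ^ s * ((|k| : ℤ) : ℝ) ^ ε *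
                (|((q.1 + q.2.1 : ℤ) : ℝ)| * |((k - q.2.1 : ℤ) : ℝ)| *
                  |((k - q.1 : ℤ) : ℝ)|)⁻¹) *
              (((|q.2.2| : ℤ) : ℝ) ^ s * ‖ξ q.2.2‖ *
                (((|k - q.1 - q.2.1 - q.2.2| : ℤ) : ℝ) ^ s * ‖η (k - q.1 - q.2.1 - q.2.2)‖)) := by
            ring
  have hG2 : ∀ q : ℤ × ℤ × ℤ, W * (‖F2 q‖₊ : ENNReal) ≤
      aF q.1 * bF q.2.1 * μ2 (q.1, q.2.1) *
        (cF q.2.2 * dF (k - q.1 - q.2.1 - q.2.2)) := by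
    intro q
    by_cases hc : q.1 ≠ 0 ∧ q.2.1 ≠ 0 ∧ q.2.2 ≠ 0 ∧ k - q.1 - q.2.1 - q.2.2 ≠ 0 ∧
        (q.1 + q.2.1) * (q.1 + q.2.2 + (k - q.1 - q.2.1 - q.2.2)) *
          (q.2.1 + q.2.2 + (k - q.1 - q.2.1 - q.2.2)) ≠ 0
    case neg =>
      have hF0 : F2 q = 0 := by rw [hF2]; exact if_neg hc
      rw [hF0]
      simp
    case pos =>
      obtain ⟨h1, h2, h3, h4, h5⟩ := hc
      have e2 : (q.1 + q.2.2 + (k - q.1 - q.2.1 - q.2.2) : ℤ) = k - q.2.1 := by ring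
      have e3 : (q.2.1 + q.2.2 + (k - q.1 - q.2.1 - q.2.2) : ℤ) = k - q.1 := by ring
      have e4 : (q.2.2 + (k - q.1 - q.2.1 - q.2.2) : ℤ) = k - q.1 - q.2.1 := by ring
      have hα : q.1 + q.2.1 ≠ 0 := by
        intro h; rw [h] at h5; simp at h5
      have hβ : k - q.2.1 ≠ 0 := by
        intro h; rw [e2] at h5; rw [h] at h5; simp at h5
      have hγ : k - q.1 ≠ 0 := by
        intro h; rw [e3] at h5; rw [h] at h5; simp at h5
      have hg : (q.1, q.2.1).1 ≠ 0 ∧ (q.1, q.2.1).2 ≠ 0 ∧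
          (q.1, q.2.1).1 + (q.1, q.2.1).2 ≠ 0 ∧ k - (q.1, q.2.1).2 ≠ 0 ∧
          k - (q.1, q.2.1).1 ≠ 0 := ⟨h1, h2, hα, hβ, hγ⟩
      have hK1 : (0:ℝ) < |((q.1 : ℤ) : ℝ)| := abs_pos.mpr (Int.cast_ne_zero.mpr h1)
      have hA : (0:ℝ) < |((q.1 + q.2.1 : ℤ) : ℝ)| := abs_pos.mpr (Int.cast_ne_zero.mpr hα)
      have hB : (0:ℝ) < |((k - q.2.1 : ℤ) : ℝ)| := abs_pos.mpr (Int.cast_ne_zero.mpr hβ)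
      have hC : (0:ℝ) < |((k - q.1 : ℤ) : ℝ)| := abs_pos.mpr (Int.cast_ne_zero.mpr hγ)
      have hwD : |((k - q.1 - q.2.1 : ℤ) : ℝ)| *
          (|((q.1 : ℤ) : ℝ)| * |((q.1 + q.2.1 : ℤ) : ℝ)| * |((k - q.2.1 : ℤ) : ℝ)| *
            |((k - q.1 : ℤ) : ℝ)|)⁻¹ ≤ m2 (q.1, q.2.1) := by
        have hw : |((k - q.1 - q.2.1 : ℤ) : ℝ)| ≤
            |((k - q.1 : ℤ) : ℝ)| + |((q.1 + q.2.1 : ℤ) : ℝ)| + |((q.1 : ℤ) : ℝ)| := by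
          have := abs_triple k q.1 q.2.1
          push_cast
          exact_mod_cast this
        calc |((k - q.1 - q.2.1 : ℤ) : ℝ)| *
              (|((q.1 : ℤ) : ℝ)| * |((q.1 + q.2.1 : ℤ) : ℝ)| * |((k - q.2.1 : ℤ) : ℝ)| *
                |((k - q.1 : ℤ) : ℝ)|)⁻¹
            ≤ (|((k - q.1 : ℤ) : ℝ)| + |((q.1 + q.2.1 : ℤ) : ℝ)| + |((q.1 : ℤ) : ℝ)|) *
              (|((q.1 : ℤ) : ℝ)| * |((q.1 + q.2.1 : ℤ) : ℝ)| * |((k - q.2.1 : ℤ) : ℝ)| *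
                |((k - q.1 : ℤ) : ℝ)|)⁻¹ := by
              apply mul_le_mul_of_nonneg_right hw
              positivity
          _ = m2 (q.1, q.2.1) := by
              rw [hm2]
              dsimp only
              rw [show (|((q.1 : ℤ) : ℝ)| * |((q.1 + q.2.1 : ℤ) : ℝ)| *
                  |((k - q.2.1 : ℤ) : ℝ)| * |((k - q.1 : ℤ) : ℝ)|)⁻¹ =
                  |((q.1 : ℤ) : ℝ)|⁻¹ * |((q.1 + q.2.1 : ℤ) : ℝ)|⁻¹ *
                  |((k - q.2.1 : ℤ) : ℝ)|⁻¹ * |((k - q.1 : ℤ) : ℝ)|⁻¹ from by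
                rw [mul_inv, mul_inv, mul_inv]]
              have c1 : |((q.1 : ℤ) : ℝ)| * |((q.1 : ℤ) : ℝ)|⁻¹ = 1 :=
                mul_inv_cancel₀ (ne_of_gt hK1)
              have c2 : |((q.1 + q.2.1 : ℤ) : ℝ)| * |((q.1 + q.2.1 : ℤ) : ℝ)|⁻¹ = 1 :=
                mul_inv_cancel₀ (ne_of_gt hA)
              have c3 : |((k - q.1 : ℤ) : ℝ)| * |((k - q.1 : ℤ) : ℝ)|⁻¹ = 1 :=
                mul_inv_cancel₀ (ne_of_gt hC)
              linear_combination
                (|((q.1 : ℤ) : ℝ)|⁻¹ * |((q.1 + q.2.1 : ℤ) : ℝ)|⁻¹ *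
                  |((k - q.2.1 : ℤ) : ℝ)|⁻¹) * c3 +
                (|((q.1 : ℤ) : ℝ)|⁻¹ * |((k - q.2.1 : ℤ) : ℝ)|⁻¹ *
                  |((k - q.1 : ℤ) : ℝ)|⁻¹) * c2 +
                (|((q.1 + q.2.1 : ℤ) : ℝ)|⁻¹ * |((k - q.2.1 : ℤ) : ℝ)|⁻¹ *
                  |((k - q.1 : ℤ) : ℝ)|⁻¹) * c1
      rw [hF2]
      dsimp only
      rw [if_pos ⟨h1, h2, h3, h4, h5⟩, e2, e3, e4]
      rw [haF, hbF, hcF, hdF, hμ2]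
      dsimp only
      rw [if_neg h1, if_neg h2, if_neg h3, if_neg h4, if_pos hg]
      rw [← ofReal_norm_eq_coe_nnnorm]
      simp only [norm_div, norm_mul, norm_osc4, one_mul, Complex.norm_intCast]
      rw [div_eq_mul_inv, hW, ← ENNReal.ofReal_mul (Real.rpow_nonneg (habs0 k) _)]
      refine ofReal_prod_le5 (hw0 φ q.1) (hw0 ψ q.2.1)
        (mul_nonneg (mul_nonneg (Real.rpow_nonneg (by norm_num) s)
          (Real.rpow_nonneg (habs0 k) ε)) (hm2nn _)) (hw0 ξ q.2.2) ?_
      have hkey := rk_pow_bound (ε := ε) hs (k := k) hk h1 h2 h3 h4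
        (by ring : q.1 + q.2.1 + q.2.2 + (k - q.1 - q.2.1 - q.2.2) = k)
      calc ((|k| : ℤ) : ℝ) ^ (s + ε) *
            (|((k - q.1 - q.2.1 : ℤ) : ℝ)| * ‖φ q.1‖ * ‖ψ q.2.1‖ * ‖ξ q.2.2‖ *
              ‖η (k - q.1 - q.2.1 - q.2.2)‖ *
              (|((q.1 : ℤ) : ℝ)| * |((q.1 + q.2.1 : ℤ) : ℝ)| * |((k - q.2.1 : ℤ) : ℝ)| *
                |((k - q.1 : ℤ) : ℝ)|)⁻¹)
          = ((|k| : ℤ) : ℝ) ^ (s + ε) *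
            ((‖φ q.1‖ * ‖ψ q.2.1‖ * ‖ξ q.2.2‖ * ‖η (k - q.1 - q.2.1 - q.2.2)‖) *
              (|((k - q.1 - q.2.1 : ℤ) : ℝ)| *
                (|((q.1 : ℤ) : ℝ)| * |((q.1 + q.2.1 : ℤ) : ℝ)| * |((k - q.2.1 : ℤ) : ℝ)| *
                  |((k - q.1 : ℤ) : ℝ)|)⁻¹)) := by ring
        _ ≤ ((4 : ℝ) ^ s * (((|q.1| : ℤ) : ℝ) ^ s * (((|q.2.1| : ℤ) : ℝ) ^ s *
              (((|q.2.2| : ℤ) : ℝ) ^ s * ((|k - q.1 - q.2.1 - q.2.2| : ℤ) : ℝ) ^ s))) *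
              ((|k| : ℤ) : ℝ) ^ ε) *
            ((‖φ q.1‖ * ‖ψ q.2.1‖ * ‖ξ q.2.2‖ * ‖η (k - q.1 - q.2.1 - q.2.2)‖) *
              m2 (q.1, q.2.1)) := by
            apply mul_le_mul hkey
            · apply mul_le_mul_of_nonneg_left hwD
              positivity
            · positivity
            · positivity
        _ = ((|q.1| : ℤ) : ℝ) ^ s * ‖φ q.1‖ * (((|q.2.1| : ℤ) : ℝ) ^ s * ‖ψ q.2.1‖) *
              ((4:ℝ) ^ s * ((|k| : ℤ) : ℝ) ^ ε * m2 (q.1, q.2.1)) *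
              (((|q.2.2| : ℤ) : ℝ) ^ s * ‖ξ q.2.2‖ *
                (((|k - q.1 - q.2.1 - q.2.2| : ℤ) : ℝ) ^ s *
                  ‖η (k - q.1 - q.2.1 - q.2.2)‖)) := by
            ring

  have h16 : ((4:ℝ) ^ s) ^ 2 = (16:ℝ) ^ s := by
    rw [pow_two, ← Real.mul_rpow (by norm_num) (by norm_num)]
    norm_num
  have hrk2 : ((((|k| : ℤ) : ℝ)) ^ ε) ^ 2 = ((|k| : ℤ) : ℝ) ^ (2 * ε) :=
    rpow_sq_comm (habs0 k) ε
  have hc2nn : (0:ℝ) ≤ (16:ℝ) ^ s * ((|k| : ℤ) : ℝ) ^ (2 * ε) :=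
    mul_nonneg (Real.rpow_nonneg (by norm_num) s) (Real.rpow_nonneg (habs0 k) _)
  have hμ1pt : ∀ p : ℤ × ℤ, μ1 p ^ 2 ≤ ENNReal.ofReal
      ((16:ℝ) ^ s * ((|k| : ℤ) : ℝ) ^ (2 * ε) *
        (3 * (iv p.1 * (iv (p.1 + p.2) * iv (k - p.2)) +
              iv p.1 * iv (k - p.1) * iv (k - p.2) +
              iv (k - p.1) * (iv (p.1 + p.2) * iv (k - p.2))))) := by
    intro p
    rw [hμ1]
    dsimp only
    by_cases hg : p.1 ≠ 0 ∧ p.2 ≠ 0 ∧ p.1 + p.2 ≠ 0 ∧ k - p.2 ≠ 0 ∧ k - p.1 ≠ 0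
    case neg =>
      rw [if_neg hg]
      simp
    case pos =>
      rw [if_pos hg, ← ENNReal.ofReal_pow (mul_nonneg (mul_nonneg
        (Real.rpow_nonneg (by norm_num) s) (Real.rpow_nonneg (habs0 k) ε)) (hm1nn p))]
      apply ENNReal.ofReal_le_ofReal
      have hm1sq : m1 p ^ 2 = iv (k - p.1) * (iv (p.1 + p.2) * iv (k - p.2)) := by
        rw [hm1]
        dsimp only
        rw [mul_inv, mul_inv, mul_pow, mul_pow, inv_abs_sq, inv_abs_sq, inv_abs_sq]
        unfold iv
        ring
      rw [mul_pow, mul_pow, h16, hrk2, hm1sq]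
      apply mul_le_mul_of_nonneg_left _ hc2nn
      have v1 := mul_nonneg (iv_nonneg p.1)
        (mul_nonneg (iv_nonneg (p.1 + p.2)) (iv_nonneg (k - p.2)))
      have v2 := mul_nonneg (mul_nonneg (iv_nonneg p.1) (iv_nonneg (k - p.1)))
        (iv_nonneg (k - p.2))
      have v3 := mul_nonneg (iv_nonneg (k - p.1))
        (mul_nonneg (iv_nonneg (p.1 + p.2)) (iv_nonneg (k - p.2)))
      linarith
  have hμ2pt : ∀ p : ℤ × ℤ, μ2 p ^ 2 ≤ ENNReal.ofReal
      ((16:ℝ) ^ s * ((|k| : ℤ) : ℝ) ^ (2 * ε) *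
        (3 * (iv p.1 * (iv (p.1 + p.2) * iv (k - p.2)) +
              iv p.1 * iv (k - p.1) * iv (k - p.2) +
              iv (k - p.1) * (iv (p.1 + p.2) * iv (k - p.2))))) := by
    intro p
    rw [hμ2]
    dsimp only
    by_cases hg : p.1 ≠ 0 ∧ p.2 ≠ 0 ∧ p.1 + p.2 ≠ 0 ∧ k - p.2 ≠ 0 ∧ k - p.1 ≠ 0
    case neg =>
      rw [if_neg hg]
      simp
    case pos =>
      rw [if_pos hg, ← ENNReal.ofReal_pow (mul_nonneg (mul_nonneg
        (Real.rpow_nonneg (by norm_num) s) (Real.rpow_nonneg (habs0 k) ε)) (hm2nn p))]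
      apply ENNReal.ofReal_le_ofReal
      rw [mul_pow, mul_pow, h16, hrk2]
      apply mul_le_mul_of_nonneg_left _ hc2nn
      rw [hm2]
      dsimp only
      refine sum3_sq_le _ _ _ _ _ _ ?_ ?_ ?_
      · rw [mul_pow, mul_pow, inv_abs_sq, inv_abs_sq, inv_abs_sq]
        unfold iv
        ring
      · rw [mul_pow, mul_pow, inv_abs_sq, inv_abs_sq, inv_abs_sq]
        unfold iv
        ring
      · rw [mul_pow, mul_pow, inv_abs_sq, inv_abs_sq, inv_abs_sq]
        unfold iv
        ring
  have hMu1 : ∑' p : ℤ × ℤ, μ1 p ^ 2 ≤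
      ENNReal.ofReal ((16:ℝ) ^ s * ((|k| : ℤ) : ℝ) ^ (2 * ε) * (CT * iv k)) :=
    mu_sq_sum_le k hk _ hc2nn μ1 hμ1pt
  have hMu2 : ∑' p : ℤ × ℤ, μ2 p ^ 2 ≤
      ENNReal.ofReal ((16:ℝ) ^ s * ((|k| : ℤ) : ℝ) ^ (2 * ε) * (CT * iv k)) :=
    mu_sq_sum_le k hk _ hc2nn μ2 hμ2pt
  have hAeq : ∑' n : ℤ, aF n ^ 2 = ENNReal.ofReal (hnorm s φ ^ 2) := by
    rw [haF]; exact sum_sq_weighted s φ hφ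
  have hBeq : ∑' n : ℤ, bF n ^ 2 = ENNReal.ofReal (hnorm s ψ ^ 2) := by
    rw [hbF]; exact sum_sq_weighted s ψ hψ
  have hCeq : ∑' n : ℤ, cF n ^ 2 = ENNReal.ofReal (hnorm s ξ ^ 2) := by
    rw [hcF]; exact sum_sq_weighted s ξ hξ
  have hDeq : ∑' n : ℤ, dF n ^ 2 = ENNReal.ofReal (hnorm s η ^ 2) := by
    rw [hdF]; exact sum_sq_weighted s η hη
  set Xb : ENNReal := ENNReal.ofReal (hnorm s φ ^ 2) * ENNReal.ofReal (hnorm s ψ ^ 2) *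
    ENNReal.ofReal (hnorm s ξ ^ 2) * ENNReal.ofReal (hnorm s η ^ 2) *
    ENNReal.ofReal ((16:ℝ) ^ s * ((|k| : ℤ) : ℝ) ^ (2 * ε) * (CT * iv k)) with hXb
  have h41 : W * (‖B41 t φ ψ ξ η k‖₊ : ENNReal) ≤ Xb ^ (1/2 : ℝ) := by
    rw [hB41]
    calc W * (‖∑' q : ℤ × ℤ × ℤ, F1 q‖₊ : ENNReal)
        ≤ W * ∑' q : ℤ × ℤ × ℤ, (‖F1 q‖₊ : ENNReal) :=
          mul_le_mul_right (enn_norm_tsum_le F1) W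
      _ = ∑' q : ℤ × ℤ × ℤ, W * (‖F1 q‖₊ : ENNReal) := ENNReal.tsum_mul_left.symm
      _ ≤ ((∑' n : ℤ, aF n ^ 2) * (∑' n : ℤ, bF n ^ 2) * (∑' n : ℤ, cF n ^ 2) *
            (∑' n : ℤ, dF n ^ 2) * (∑' p : ℤ × ℤ, μ1 p ^ 2)) ^ (1/2 : ℝ) := chain k hG1
      _ ≤ Xb ^ (1/2 : ℝ) := by
          apply ENNReal.rpow_le_rpow _ (by norm_num)
          rw [hAeq, hBeq, hCeq, hDeq, hXb]
          exact mul_le_mul_right hMu1 _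
  have h42 : W * (‖B42 t φ ψ ξ η k‖₊ : ENNReal) ≤ Xb ^ (1/2 : ℝ) := by
    rw [hB42]
    calc W * (‖∑' q : ℤ × ℤ × ℤ, F2 q‖₊ : ENNReal)
        ≤ W * ∑' q : ℤ × ℤ × ℤ, (‖F2 q‖₊ : ENNReal) :=
          mul_le_mul_right (enn_norm_tsum_le F2) W
      _ = ∑' q : ℤ × ℤ × ℤ, W * (‖F2 q‖₊ : ENNReal) := ENNReal.tsum_mul_left.symm
      _ ≤ ((∑' n : ℤ, aF n ^ 2) * (∑' n : ℤ, bF n ^ 2) * (∑' n : ℤ, cF n ^ 2) *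
            (∑' n : ℤ, dF n ^ 2) * (∑' p : ℤ × ℤ, μ2 p ^ 2)) ^ (1/2 : ℝ) := chain k hG2
      _ ≤ Xb ^ (1/2 : ℝ) := by
          apply ENNReal.rpow_le_rpow _ (by norm_num)
          rw [hAeq, hBeq, hCeq, hDeq, hXb]
          exact mul_le_mul_right hMu2 _
  have hB4eq : B4 t φ ψ ξ η k = B41 t φ ψ ξ η k + B42 t φ ψ ξ η k := rfl
  have htri : (‖B4 t φ ψ ξ η k‖₊ : ENNReal) ≤
      (‖B41 t φ ψ ξ η k‖₊ : ENNReal) + (‖B42 t φ ψ ξ η k‖₊ : ENNReal) := by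
    rw [hB4eq]
    exact_mod_cast nnnorm_add_le _ _
  have hT : W * (‖B4 t φ ψ ξ η k‖₊ : ENNReal) ≤ 2 * Xb ^ (1/2 : ℝ) := by
    calc W * (‖B4 t φ ψ ξ η k‖₊ : ENNReal)
        ≤ W * ((‖B41 t φ ψ ξ η k‖₊ : ENNReal) + (‖B42 t φ ψ ξ η k‖₊ : ENNReal)) :=
          mul_le_mul_right htri W
      _ = W * (‖B41 t φ ψ ξ η k‖₊ : ENNReal) + W * (‖B42 t φ ψ ξ η k‖₊ : ENNReal) :=
          mul_add _ _ _
      _ ≤ Xb ^ (1/2 : ℝ) + Xb ^ (1/2 : ℝ) := add_le_add h41 h42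
      _ = 2 * Xb ^ (1/2 : ℝ) := (two_mul _).symm
  have hsq2 : (W * (‖B4 t φ ψ ξ η k‖₊ : ENNReal)) ^ 2 ≤ 4 * Xb := by
    calc (W * (‖B4 t φ ψ ξ η k‖₊ : ENNReal)) ^ 2
        = (W * (‖B4 t φ ψ ξ η k‖₊ : ENNReal)) * (W * (‖B4 t φ ψ ξ η k‖₊ : ENNReal)) :=
          pow_two _
      _ ≤ (2 * Xb ^ (1/2 : ℝ)) * (2 * Xb ^ (1/2 : ℝ)) := mul_le_mul' hT hT
      _ = 4 * (Xb ^ (1/2 : ℝ) * Xb ^ (1/2 : ℝ)) := by ring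
      _ = 4 * (Xb ^ (1/2 : ℝ)) ^ 2 := by rw [pow_two]
      _ = 4 * Xb := by rw [ennreal_half_sq]
  have hL : ENNReal.ofReal (wt (s + ε) k * ‖B4 t φ ψ ξ η k‖ ^ 2) =
      (W * (‖B4 t φ ψ ξ η k‖₊ : ENNReal)) ^ 2 := by
    rw [hW, ← ofReal_norm_eq_coe_nnnorm,
      ← ENNReal.ofReal_mul (Real.rpow_nonneg (habs0 k) _),
      ← ENNReal.ofReal_pow (mul_nonneg (Real.rpow_nonneg (habs0 k) _) (norm_nonneg _))]
    congr 1
    rw [mul_pow, rpow_sq_comm (habs0 k) (s + ε)]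
    rfl
  have hXbval : (4 : ENNReal) * Xb = ENNReal.ofReal (4 * (hnorm s φ ^ 2 * hnorm s ψ ^ 2 *
      hnorm s ξ ^ 2 * hnorm s η ^ 2 *
      ((16:ℝ) ^ s * ((|k| : ℤ) : ℝ) ^ (2 * ε) * (CT * iv k)))) := by
    rw [ENNReal.ofReal_mul (by norm_num : (0:ℝ) ≤ 4),
      ENNReal.ofReal_mul (mul_nonneg (mul_nonneg (mul_nonneg (sq_nonneg _) (sq_nonneg _))
        (sq_nonneg _)) (sq_nonneg _)),
      ENNReal.ofReal_mul (mul_nonneg (mul_nonneg (sq_nonneg _) (sq_nonneg _)) (sq_nonneg _)),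
      ENNReal.ofReal_mul (mul_nonneg (sq_nonneg _) (sq_nonneg _)),
      ENNReal.ofReal_mul (sq_nonneg _), hXb]
    norm_num
  have hmain := le_trans (le_of_eq hL) hsq2
  rw [hXbval] at hmain
  have hRnn : (0:ℝ) ≤ 4 * (hnorm s φ ^ 2 * hnorm s ψ ^ 2 * hnorm s ξ ^ 2 * hnorm s η ^ 2 *
      ((16:ℝ) ^ s * ((|k| : ℤ) : ℝ) ^ (2 * ε) * (CT * iv k))) :=
    mul_nonneg (by norm_num) (mul_nonneg (mul_nonneg (mul_nonneg (mul_nonneg (sq_nonneg _)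
      (sq_nonneg _)) (sq_nonneg _)) (sq_nonneg _))
      (mul_nonneg hc2nn (mul_nonneg CT_nonneg (iv_nonneg k))))
  have hreal := (ENNReal.ofReal_le_ofReal_iff hRnn).mp hmain
  calc wt (s + ε) k * ‖B4 t φ ψ ξ η k‖ ^ 2
      ≤ 4 * (hnorm s φ ^ 2 * hnorm s ψ ^ 2 * hnorm s ξ ^ 2 * hnorm s η ^ 2 *
        ((16:ℝ) ^ s * ((|k| : ℤ) : ℝ) ^ (2 * ε) * (CT * iv k))) := hreal
    _ = 4 * (16:ℝ) ^ s * CT * (hnorm s φ * hnorm s ψ * hnorm s ξ * hnorm s η) ^ 2 *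
        (((|k| : ℤ) : ℝ) ^ (2 * ε) * iv k) := by ring

end B4Aux
/-- Smoothing property of the quadrilinear operator
`B₄ = B₄¹ + B₄²`. -/
theorem b4_smoothing (s ε : ℝ) (hs : 0 ≤ s) (hε0 : 0 < ε) (hε : ε < 1 / 2) :
    ∃ C : ℝ, ∀ t : ℝ, ∀ φ ψ ξ η : ℤ → ℂ,
      memH s φ → memH s ψ → memH s ξ → memH s η →
      memH (s + ε) (B4 t φ ψ ξ η) ∧
      hnorm (s + ε) (B4 t φ ψ ξ η) ≤
        C * hnorm s φ * hnorm s ψ * hnorm s ξ * hnorm s η := by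
  classical
  have habs0 : ∀ n : ℤ, (0:ℝ) ≤ ((|n| : ℤ) : ℝ) := fun n => by exact_mod_cast abs_nonneg n
  set g : ℤ → ℝ := fun n => ((|n| : ℤ) : ℝ) ^ (2 * ε) * B4Aux.iv n with hg
  have hgnn : ∀ n, 0 ≤ g n := fun n =>
    mul_nonneg (Real.rpow_nonneg (habs0 n) _) (B4Aux.iv_nonneg n)
  have hmaj : Summable (fun n : ℤ => |(n:ℝ)| ^ (-(2 - 2*ε))) :=
    Real.summable_abs_int_rpow (by linarith)
  have hgle : ∀ n : ℤ, g n ≤ |(n:ℝ)| ^ (-(2 - 2*ε)) := by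
    intro n
    rcases eq_or_ne n 0 with h | h
    · subst h
      rw [hg]
      simp only [B4Aux.iv_zero, mul_zero]
      positivity
    · have habs : ((|n| : ℤ) : ℝ) = |(n:ℝ)| := by push_cast; ring
      have hpos : (0:ℝ) < |(n:ℝ)| := abs_pos.mpr (Int.cast_ne_zero.mpr h)
      rw [hg]
      dsimp only
      rw [habs]
      have hiv : B4Aux.iv n = |(n:ℝ)| ^ (-(2:ℝ)) := by
        rw [Real.rpow_neg (abs_nonneg _)]
        unfold B4Aux.iv
        congr 1
        rw [show ((2:ℝ)) = ((2:ℕ):ℝ) by norm_num, Real.rpow_natCast, sq_abs]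
      rw [hiv, ← Real.rpow_add hpos]
      apply le_of_eq
      congr 1
      ring
  have hgsum : Summable g := Summable.of_nonneg_of_le hgnn hgle hmaj
  refine ⟨Real.sqrt (4 * (16:ℝ) ^ s * B4Aux.CT * (∑' n : ℤ, g n)), ?_⟩
  intro t φ ψ ξ η hφ hψ hξ hη
  set Zε : ℝ := ∑' n : ℤ, g n with hZε
  have hZεnn : 0 ≤ Zε := tsum_nonneg hgnn
  have hKnn : (0:ℝ) ≤ 4 * (16:ℝ) ^ s * B4Aux.CT :=
    mul_nonneg (mul_nonneg (by norm_num) (Real.rpow_nonneg (by norm_num) s)) B4Aux.CT_nonneg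
  have hHnn : 0 ≤ hnorm s φ * hnorm s ψ * hnorm s ξ * hnorm s η :=
    mul_nonneg (mul_nonneg (mul_nonneg (Real.sqrt_nonneg _) (Real.sqrt_nonneg _))
      (Real.sqrt_nonneg _)) (Real.sqrt_nonneg _)
  have hkey : ∀ x : {k : ℤ // k ≠ 0}, wt (s + ε) x.1 * ‖B4 t φ ψ ξ η x.1‖ ^ 2 ≤
      (4 * (16:ℝ) ^ s * B4Aux.CT *
        (hnorm s φ * hnorm s ψ * hnorm s ξ * hnorm s η) ^ 2) * g x.1 := by
    intro x
    have h := B4Aux.key_bound (ε := ε) hs t hφ hψ hξ hη x.2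
    refine le_of_le_of_eq h ?_
    simp only [hg]
    try ring
  have hrs : Summable (fun x : {k : ℤ // k ≠ 0} =>
      (4 * (16:ℝ) ^ s * B4Aux.CT *
        (hnorm s φ * hnorm s ψ * hnorm s ξ * hnorm s η) ^ 2) * g x.1) :=
    (hgsum.mul_left _).subtype {k : ℤ | k ≠ 0}
  have hmem : memH (s + ε) (B4 t φ ψ ξ η) :=
    Summable.of_nonneg_of_le
      (fun x => mul_nonneg (B4Aux.wt_nonneg _ _) (sq_nonneg _)) hkey hrs
  refine ⟨hmem, ?_⟩
  have hle1 : ∑' x : {k : ℤ // k ≠ 0}, wt (s + ε) x.1 * ‖B4 t φ ψ ξ η x.1‖ ^ 2 ≤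
      (4 * (16:ℝ) ^ s * B4Aux.CT *
        (hnorm s φ * hnorm s ψ * hnorm s ξ * hnorm s η) ^ 2) *
        ∑' x : {k : ℤ // k ≠ 0}, g x.1 := by
    rw [← tsum_mul_left]
    exact Summable.tsum_le_tsum hkey hmem hrs
  have hle2 : ∑' x : {k : ℤ // k ≠ 0}, g x.1 ≤ Zε :=
    Summable.tsum_le_tsum_of_inj (Subtype.val) Subtype.val_injective (fun c _ => hgnn c)
      (fun x => le_rfl) (hgsum.subtype _) hgsum
  have hfin : ∑' x : {k : ℤ // k ≠ 0}, wt (s + ε) x.1 * ‖B4 t φ ψ ξ η x.1‖ ^ 2 ≤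
      (4 * (16:ℝ) ^ s * B4Aux.CT * Zε) *
        (hnorm s φ * hnorm s ψ * hnorm s ξ * hnorm s η) ^ 2 := by
    have := mul_le_mul_of_nonneg_left hle2 (mul_nonneg hKnn (sq_nonneg
      (hnorm s φ * hnorm s ψ * hnorm s ξ * hnorm s η)))
    calc ∑' x : {k : ℤ // k ≠ 0}, wt (s + ε) x.1 * ‖B4 t φ ψ ξ η x.1‖ ^ 2
        ≤ (4 * (16:ℝ) ^ s * B4Aux.CT *
            (hnorm s φ * hnorm s ψ * hnorm s ξ * hnorm s η) ^ 2) *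
            ∑' x : {k : ℤ // k ≠ 0}, g x.1 := hle1
      _ ≤ (4 * (16:ℝ) ^ s * B4Aux.CT *
            (hnorm s φ * hnorm s ψ * hnorm s ξ * hnorm s η) ^ 2) * Zε := by
          apply mul_le_mul_of_nonneg_left hle2
          exact mul_nonneg hKnn (sq_nonneg _)
      _ = (4 * (16:ℝ) ^ s * B4Aux.CT * Zε) *
            (hnorm s φ * hnorm s ψ * hnorm s ξ * hnorm s η) ^ 2 := by ring
  calc hnorm (s + ε) (B4 t φ ψ ξ η)
      = Real.sqrt (∑' x : {k : ℤ // k ≠ 0}, wt (s + ε) x.1 * ‖B4 t φ ψ ξ η x.1‖ ^ 2) := rfl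
    _ ≤ Real.sqrt ((4 * (16:ℝ) ^ s * B4Aux.CT * Zε) *
          (hnorm s φ * hnorm s ψ * hnorm s ξ * hnorm s η) ^ 2) := Real.sqrt_le_sqrt hfin
    _ = Real.sqrt (4 * (16:ℝ) ^ s * B4Aux.CT * Zε) *
          (hnorm s φ * hnorm s ψ * hnorm s ξ * hnorm s η) := by
        rw [Real.sqrt_mul (mul_nonneg hKnn hZεnn), Real.sqrt_sq hHnn]
    _ = Real.sqrt (4 * (16:ℝ) ^ s * B4Aux.CT * Zε) * hnorm s φ * hnorm s ψ *
          hnorm s ξ * hnorm s η := by ring
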